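/- Suppose n ≥ 2, B is a normal q⁺_n-crystal, and b, c ∈ B. Then: (a) if wt(b)_1 ≠ 0, then e_1̄e_0(b) = e_0e_1̄(b) and e_1̄f_0(b) = f_0e_1̄(b) (with all operators sending 0 to 0); (b) if e_1̄(b) = c, then ε_0(b) ≤ ε_0(c) and φ_0(b) ≤ φ_0(c). -/

import Mathlib

namespace QPaper

abbrev Std := ℕ × Bool
abbrev PLetter := ℤ × Bool
abbrev NLet := ℕ × Bool
abbrev Tab := ℕ × ℕ → Option NLet
abbrev ZTab := ℕ × ℕ → Option PLetter

/-- iterate a partial operator -/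
def iterO {B : Type} (g : B → Option B) : ℕ → B → Option B
  | 0, b => some b
  | k + 1, b => (iterO g k b).bind g

/-- Raw data of a crystal with operators `e_i, f_i` (`1 ≤ i ≤ n-1`),
`e_1bar, f_1bar`, `e_0, f_0`, and a weight map with coordinates indexed `1,…,n`. -/
structure Crystal (n : ℕ) (B : Type) where
  wt : B → ℕ → ℤ
  e : ℕ → B → Option B
  f : ℕ → B → Option B
  ebar : B → Option B
  fbar : B → Option B
  e0 : B → Option B
  f0 : B → Option B

namespace Crystal

variable {n : ℕ} {B B' B'' : Type}

noncomputable def eps (C : Crystal n B) (i : ℕ) (b : B) : ℕ := sSup {k | iterO (C.e i) k b ≠ none}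
noncomputable def phi (C : Crystal n B) (i : ℕ) (b : B) : ℕ := sSup {k | iterO (C.f i) k b ≠ none}
noncomputable def epsBar (C : Crystal n B) (b : B) : ℕ := sSup {k | iterO C.ebar k b ≠ none}
noncomputable def phiBar (C : Crystal n B) (b : B) : ℕ := sSup {k | iterO C.fbar k b ≠ none}
noncomputable def eps0 (C : Crystal n B) (b : B) : ℕ := sSup {k | iterO C.e0 k b ≠ none}
noncomputable def phi0 (C : Crystal n B) (b : B) : ℕ := sSup {k | iterO C.f0 k b ≠ none}

/-- The `gl_n`-crystal axioms (S1)-(S2). -/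
structure IsGL (C : Crystal n B) : Prop where
  wt_zero : ∀ b i, i = 0 ∨ n < i → C.wt b i = 0
  e_range : ∀ i b, i = 0 ∨ n ≤ i → C.e i b = none
  f_range : ∀ i b, i = 0 ∨ n ≤ i → C.f i b = none
  e_bdd : ∀ i b, ∃ N, iterO (C.e i) N b = none
  f_bdd : ∀ i b, ∃ N, iterO (C.f i) N b = none
  ef_iff : ∀ i, 1 ≤ i → i ≤ n - 1 → ∀ b c, C.e i b = some c ↔ C.f i c = some b
  e_wt : ∀ i, 1 ≤ i → i ≤ n - 1 → ∀ b c, C.e i b = some c →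
    ∀ j, C.wt c j = C.wt b j + (if j = i then 1 else 0) - (if j = i + 1 then 1 else 0)
  string_eq : ∀ i, 1 ≤ i → i ≤ n - 1 → ∀ b,
    (C.phi i b : ℤ) - (C.eps i b : ℤ) = C.wt b i - C.wt b (i + 1)

/-- The `q_n`-crystal axioms (P1)-(P3) on top of the `gl_n` ones. -/
structure IsQ (C : Crystal n B) extends IsGL C : Prop where
  wt_nonneg : ∀ b i, 0 ≤ C.wt b i
  ebar_bdd : ∀ b, ∃ N, iterO C.ebar N b = none
  fbar_bdd : ∀ b, ∃ N, iterO C.fbar N b = none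
  bar_iff : ∀ b c, C.ebar b = some c ↔ C.fbar c = some b
  ebar_wt : 2 ≤ n → ∀ b c, C.ebar b = some c →
    (∀ j, C.wt c j = C.wt b j + (if j = 1 then 1 else 0) - (if j = 2 then 1 else 0)) ∧
    (∀ i, 3 ≤ i → i ≤ n - 1 → C.eps i b = C.eps i c ∧ C.phi i b = C.phi i c)
  bar_comm : 2 ≤ n → ∀ i, 3 ≤ i → i ≤ n - 1 → ∀ b,
    (C.e i b).bind C.ebar = (C.ebar b).bind (C.e i) ∧
    (C.e i b).bind C.fbar = (C.fbar b).bind (C.e i) ∧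
    (C.f i b).bind C.ebar = (C.ebar b).bind (C.f i) ∧
    (C.f i b).bind C.fbar = (C.fbar b).bind (C.f i)
  bar_string : 2 ≤ n → ∀ b,
    C.epsBar b + C.phiBar b = (if C.wt b 1 = 0 ∧ C.wt b 2 = 0 then 0 else 1)
  bar_none : n < 2 → ∀ b, C.ebar b = none ∧ C.fbar b = none

/-- The `q⁺_n`-crystal axioms (Q1)-(Q3) on top of the `q_n` ones. -/
structure IsQPlus (C : Crystal n B) extends IsQ C : Prop where
  e0_bdd : ∀ b, ∃ N, iterO C.e0 N b = none
  f0_bdd : ∀ b, ∃ N, iterO C.f0 N b = none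
  zero_iff : ∀ b c, C.e0 b = some c ↔ C.f0 c = some b
  e0_wt : ∀ b c, C.e0 b = some c →
    (∀ j, C.wt c j = C.wt b j) ∧
    (∀ i, 1 ≤ i → i ≤ n - 1 → C.eps i b = C.eps i c ∧ C.phi i b = C.phi i c) ∧
    (C.epsBar b = C.epsBar c ∧ C.phiBar b = C.phiBar c)
  zero_comm : ∀ i, 2 ≤ i → i ≤ n - 1 → ∀ b,
    (C.e i b).bind C.e0 = (C.e0 b).bind (C.e i) ∧
    (C.e i b).bind C.f0 = (C.f0 b).bind (C.e i) ∧
    (C.f i b).bind C.e0 = (C.e0 b).bind (C.f i) ∧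
    (C.f i b).bind C.f0 = (C.f0 b).bind (C.f i)
  zero_string : ∀ b, C.eps0 b + C.phi0 b = (if C.wt b 1 = 0 then 0 else 1)

/-- The standard `q⁺_n`-crystal `𝔹⁺_n` on letters `(k, primed?)`, `1 ≤ k ≤ n`. -/
def stdC (n : ℕ) : Crystal n Std where
  wt := fun l j => if j = l.1 ∧ 1 ≤ l.1 ∧ l.1 ≤ n then 1 else 0
  e := fun i l => if 1 ≤ i ∧ i ≤ n - 1 ∧ l.1 = i + 1 then some (i, l.2) else none
  f := fun i l => if 1 ≤ i ∧ i ≤ n - 1 ∧ l.1 = i then some (i + 1, l.2) else none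
  ebar := fun l => if 2 ≤ n ∧ l.1 = 2 then some (1, l.2) else none
  fbar := fun l => if 2 ≤ n ∧ l.1 = 1 then some (2, l.2) else none
  e0 := fun l => if 1 ≤ n ∧ l = (1, true) then some (1, false) else none
  f0 := fun l => if 1 ≤ n ∧ l = (1, false) then some (1, true) else none

/-- The one-element crystal of weight `0`. -/
def unitC (n : ℕ) : Crystal n PUnit where
  wt := fun _ _ => 0
  e := fun _ _ => none
  f := fun _ _ => none
  ebar := fun _ => none
  fbar := fun _ => none
  e0 := fun _ => none
  f0 := fun _ => none

/-- The `q⁺_n`-tensor product of two crystals (anti-Kashiwara convention). -/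
noncomputable def tensor (C : Crystal n B) (D : Crystal n B') : Crystal n (B × B') where
  wt := fun x j => C.wt x.1 j + D.wt x.2 j
  e := fun i x =>
    if C.eps i x.1 ≤ D.phi i x.2 then (D.e i x.2).map (fun c => (x.1, c))
    else (C.e i x.1).map (fun b => (b, x.2))
  f := fun i x =>
    if C.eps i x.1 < D.phi i x.2 then (D.f i x.2).map (fun c => (x.1, c))
    else (C.f i x.1).map (fun b => (b, x.2))
  e0 := fun x =>
    if C.wt x.1 1 ≠ 0 then (C.e0 x.1).map (fun b => (b, x.2))
    else (D.e0 x.2).map (fun c => (x.1, c))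
  f0 := fun x =>
    if C.wt x.1 1 ≠ 0 then (C.f0 x.1).map (fun b => (b, x.2))
    else (D.f0 x.2).map (fun c => (x.1, c))
  ebar := fun x =>
    if C.wt x.1 1 = 0 ∧ C.wt x.1 2 = 0 then (D.ebar x.2).map (fun c => (x.1, c))
    else if h : C.wt x.1 1 = 0 ∧ ((C.ebar x.1).bind C.f0).isSome ∧ (D.e0 x.2).isSome then
      some (((C.ebar x.1).bind C.f0).get h.2.1, (D.e0 x.2).get h.2.2)
    else if h : C.wt x.1 1 = 0 ∧ ((C.ebar x.1).bind C.e0).isSome ∧ (D.f0 x.2).isSome then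
      some (((C.ebar x.1).bind C.e0).get h.2.1, (D.f0 x.2).get h.2.2)
    else (C.ebar x.1).map (fun b => (b, x.2))
  fbar := fun x =>
    if C.wt x.1 1 = 0 ∧ C.wt x.1 2 = 0 then (D.fbar x.2).map (fun c => (x.1, c))
    else if h : C.wt x.1 1 = 1 ∧ ((C.f0 x.1).bind C.fbar).isSome ∧ (D.e0 x.2).isSome then
      some (((C.f0 x.1).bind C.fbar).get h.2.1, (D.e0 x.2).get h.2.2)
    else if h : C.wt x.1 1 = 1 ∧ ((C.e0 x.1).bind C.fbar).isSome ∧ (D.f0 x.2).isSome then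
      some (((C.e0 x.1).bind C.fbar).get h.2.1, (D.f0 x.2).get h.2.2)
    else (C.fbar x.1).map (fun b => (b, x.2))

/-- Underlying type of the `m`-th tensor power of the standard crystal. -/
def PowT : ℕ → Type
  | 0 => PUnit
  | m + 1 => PowT m × Std

/-- The `m`-th `q⁺_n`-tensor power `(𝔹⁺_n)^{⊗m}`. -/
noncomputable def powC (n : ℕ) : (m : ℕ) → Crystal n (PowT m)
  | 0 => unitC n
  | m + 1 => tensor (powC n m) (stdC n)

/-- One edge of the crystal graph. -/
def step (C : Crystal n B) (b c : B) : Prop :=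
  (∃ i, C.f i b = some c) ∨ C.fbar b = some c ∨ C.f0 b = some c

/-- Weak connectivity in the crystal graph. -/
def joined (C : Crystal n B) : B → B → Prop :=
  Relation.ReflTransGen (fun b c => step C b c ∨ step C c b)

/-- Weakly connected component (full subcrystal) through `b`. -/
def component (C : Crystal n B) (b : B) : Set B := {c | joined C b c}

def mapsAgree (C : Crystal n B) (D : Crystal n B') (φ : B → B') (x : B) : Prop :=
  (∀ j, D.wt (φ x) j = C.wt x j) ∧
  (∀ i, (C.e i x).map φ = D.e i (φ x)) ∧
  (∀ i, (C.f i x).map φ = D.f i (φ x)) ∧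
  ((C.ebar x).map φ = D.ebar (φ x)) ∧
  ((C.fbar x).map φ = D.fbar (φ x)) ∧
  ((C.e0 x).map φ = D.e0 (φ x)) ∧
  ((C.f0 x).map φ = D.f0 (φ x))

/-- `S ⊆ B` and `T ⊆ B'` are isomorphic as (sub)crystals. -/
def IsIsoOn (C : Crystal n B) (D : Crystal n B') (S : Set B) (T : Set B') : Prop :=
  ∃ φ : B → B', Set.BijOn φ S T ∧ ∀ x ∈ S, mapsAgree C D φ x

/-- `φ` is an isomorphism of crystals. -/
def IsIso (C : Crystal n B) (D : Crystal n B') (φ : B → B') : Prop :=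
  Function.Bijective φ ∧ ∀ x, mapsAgree C D φ x

/-- A quasi-isomorphism of crystals: restricts to an isomorphism on every full subcrystal. -/
def IsQuasiIso (C : Crystal n B) (D : Crystal n B') (ψ : B → B') : Prop :=
  ∀ b : B, ψ '' component C b = component D (ψ b) ∧
    Set.InjOn ψ (component C b) ∧
    ∀ x ∈ component C b, mapsAgree C D ψ x

/-- Normality for `q⁺_n`-crystals. -/
def IsNormal (C : Crystal n B) : Prop :=
  IsQPlus C ∧ ∀ b : B, ∃ (m : ℕ) (x : PowT m),
    IsIsoOn C (powC n m) (component C b) (component (powC n m) x)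

/-- The string-reversing involution `σ_i` from equation (3.3). -/
noncomputable def sigma (C : Crystal n B) (i : ℕ) (b : B) : B :=
  if C.eps i b ≤ C.phi i b then (iterO (C.f i) (C.phi i b - C.eps i b) b).getD b
  else (iterO (C.e i) (C.eps i b - C.phi i b) b).getD b

/-- The involution `σ_0`. -/
noncomputable def sigma0 (C : Crystal n B) (b : B) : B :=
  (C.e0 b).getD ((C.f0 b).getD b)

/-- `σ_k ⋯ σ_2 σ_1` (applying `σ_1` first). -/
noncomputable def sigmaDown (C : Crystal n B) : ℕ → B → B
  | 0 => id
  | k + 1 => fun b => C.sigma (k + 1) (C.sigmaDown k b)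

/-- `σ_1 σ_2 ⋯ σ_k` (applying `σ_k` first). -/
noncomputable def sigmaUp (C : Crystal n B) : ℕ → B → B
  | 0 => id
  | k + 1 => fun b => C.sigmaUp k (C.sigma (k + 1) b)

noncomputable def sigmaW0Aux (C : Crystal n B) : ℕ → B → B
  | 0 => id
  | k + 1 => fun b => C.sigmaW0Aux k (C.sigmaDown (k + 1) b)

/-- `σ_{w_0} = (σ_1)(σ_2σ_1)⋯(σ_{n-1}⋯σ_2σ_1)`. -/
noncomputable def sigmaW0 (C : Crystal n B) : B → B := C.sigmaW0Aux (n - 1)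

noncomputable def sigmaW0InvAux (C : Crystal n B) : ℕ → B → B
  | 0 => id
  | k + 1 => fun b => C.sigmaUp (k + 1) (C.sigmaW0InvAux k b)

/-- The inverse `σ_{w_0}^{-1}`. -/
noncomputable def sigmaW0Inv (C : Crystal n B) : B → B := C.sigmaW0InvAux (n - 1)

/-- `σ_k ⋯ σ_1 σ_0` (applying `σ_0` first). -/
noncomputable def sigmaDown0 (C : Crystal n B) : ℕ → B → B
  | 0 => C.sigma0
  | k + 1 => fun b => C.sigma (k + 1) (C.sigmaDown0 k b)

noncomputable def sigmaW0PlusAux (C : Crystal n B) : ℕ → B → B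
  | 0 => id
  | k + 1 => fun b => C.sigmaW0PlusAux k (C.sigmaDown0 k b)

/-- `σ_{w_0^+} = (σ_0)(σ_1σ_0)(σ_2σ_1σ_0)⋯(σ_{n-1}⋯σ_1σ_0)`. -/
noncomputable def sigmaW0Plus (C : Crystal n B) : B → B := C.sigmaW0PlusAux n

/-- The operators `e_{ī}` for `1 ≤ i ≤ n-1`, with `e_{1̄} = ebar` and
`e_{ī} = σ_{i-1} σ_i e_{\overline{i-1}} σ_i σ_{i-1}`. -/
noncomputable def eBarIdx (C : Crystal n B) : ℕ → B → Option B
  | 0, _ => none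
  | 1, b => C.ebar b
  | k + 2, b =>
    (C.eBarIdx (k + 1) (C.sigma (k + 2) (C.sigma (k + 1) b))).map
      (fun c => C.sigma (k + 1) (C.sigma (k + 2) c))

/-- The operators `f_{ī}`. -/
noncomputable def fBarIdx (C : Crystal n B) : ℕ → B → Option B
  | 0, _ => none
  | 1, b => C.fbar b
  | k + 2, b =>
    (C.fBarIdx (k + 1) (C.sigma (k + 2) (C.sigma (k + 1) b))).map
      (fun c => C.sigma (k + 1) (C.sigma (k + 2) c))

/-- `e_{ī′} = σ_{w_0} f_{\overline{n-i}} σ_{w_0}^{-1}`. -/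
noncomputable def eBarPrime (C : Crystal n B) (i : ℕ) (b : B) : Option B :=
  (C.fBarIdx (n - i) (C.sigmaW0Inv b)).map C.sigmaW0

/-- `f_{ī′} = σ_{w_0} e_{\overline{n-i}} σ_{w_0}^{-1}`. -/
noncomputable def fBarPrime (C : Crystal n B) (i : ℕ) (b : B) : Option B :=
  (C.eBarIdx (n - i) (C.sigmaW0Inv b)).map C.sigmaW0

/-- `e_0^{[i]} = σ_{i-1} ⋯ σ_1 e_0 σ_1 ⋯ σ_{i-1}`. -/
noncomputable def e0Idx (C : Crystal n B) (i : ℕ) (b : B) : Option B :=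
  (C.e0 (C.sigmaUp (i - 1) b)).map (C.sigmaDown (i - 1))

/-- `f_0^{[i]} = σ_{i-1} ⋯ σ_1 f_0 σ_1 ⋯ σ_{i-1}`. -/
noncomputable def f0Idx (C : Crystal n B) (i : ℕ) (b : B) : Option B :=
  (C.f0 (C.sigmaUp (i - 1) b)).map (C.sigmaDown (i - 1))

def IsGLHighest (C : Crystal n B) (b : B) : Prop :=
  ∀ i, 1 ≤ i → i ≤ n - 1 → C.e i b = none

def IsGLLowest (C : Crystal n B) (b : B) : Prop :=
  ∀ i, 1 ≤ i → i ≤ n - 1 → C.f i b = none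

def IsQHighest (C : Crystal n B) (b : B) : Prop :=
  IsGLHighest C b ∧ ∀ i, 1 ≤ i → i ≤ n - 1 → C.eBarIdx i b = none

def IsQLowest (C : Crystal n B) (b : B) : Prop :=
  IsGLLowest C b ∧ ∀ i, 1 ≤ i → i ≤ n - 1 → C.fBarPrime i b = none

def IsQPlusHighest (C : Crystal n B) (b : B) : Prop :=
  IsQHighest C b ∧ ∀ i, 1 ≤ i → i ≤ n → C.e0Idx i b = none

def IsQPlusLowest (C : Crystal n B) (b : B) : Prop :=
  IsQLowest C b ∧ ∀ i, 1 ≤ i → i ≤ n → C.f0Idx i b = none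

/-! ### `gl_n`-specific notions (ignoring the barred and `0` operators) -/

def glStep (C : Crystal n B) (b c : B) : Prop := ∃ i, C.f i b = some c

def glJoined (C : Crystal n B) : B → B → Prop :=
  Relation.ReflTransGen (fun b c => glStep C b c ∨ glStep C c b)

def glComponent (C : Crystal n B) (b : B) : Set B := {c | glJoined C b c}

def glMapsAgree (C : Crystal n B) (D : Crystal n B') (φ : B → B') (x : B) : Prop :=
  (∀ j, D.wt (φ x) j = C.wt x j) ∧
  (∀ i, (C.e i x).map φ = D.e i (φ x)) ∧
  (∀ i, (C.f i x).map φ = D.f i (φ x))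

def IsGLIsoOn (C : Crystal n B) (D : Crystal n B') (S : Set B) (T : Set B') : Prop :=
  ∃ φ : B → B', Set.BijOn φ S T ∧ ∀ x ∈ S, glMapsAgree C D φ x

/-- The standard `gl_n`-crystal `𝔹_n` on the letters `1,…,n`. -/
def stdGLC (n : ℕ) : Crystal n ℕ where
  wt := fun l j => if j = l ∧ 1 ≤ l ∧ l ≤ n then 1 else 0
  e := fun i l => if 1 ≤ i ∧ i ≤ n - 1 ∧ l = i + 1 then some i else none
  f := fun i l => if 1 ≤ i ∧ i ≤ n - 1 ∧ l = i then some (i + 1) else none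
  ebar := fun _ => none
  fbar := fun _ => none
  e0 := fun _ => none
  f0 := fun _ => none

def GLPowT : ℕ → Type
  | 0 => PUnit
  | m + 1 => GLPowT m × ℕ

noncomputable def glPowC (n : ℕ) : (m : ℕ) → Crystal n (GLPowT m)
  | 0 => unitC n
  | m + 1 => tensor (glPowC n m) (stdGLC n)

/-- Normality for `gl_n`-crystals. -/
def IsGLNormal (C : Crystal n B) : Prop :=
  IsGL C ∧ ∀ b : B, ∃ (m : ℕ) (x : GLPowT m),
    IsGLIsoOn C (glPowC n m) (glComponent C b) (glComponent (glPowC n m) x)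

end Crystal

open Crystal

/-- Character of a finite crystal, as a polynomial in `x_1,…,x_n`. -/
noncomputable def char {n : ℕ} {B : Type} [Fintype B] (C : Crystal n B) :
    MvPolynomial (Fin n) ℤ :=
  ∑ b : B, ∏ i : Fin n, MvPolynomial.X i ^ (C.wt b ((i : ℕ) + 1)).toNat

-- Restriction of a partial operator to a subtype.
open Classical in
noncomputable def restrictP {α : Type} (P : α → Prop) (g : α → Option α) (x : Subtype P) :
    Option (Subtype P) :=
  (g x.1).bind (fun y => if h : P y then some ⟨y, h⟩ else none)

/-! ### The crystal of words `W⁺_n(m)` -/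

/-- `i`-unpaired indices (0-based) of a word, via the parenthesis matching where letters
with value `i` are `)` and letters with value `i+1` are `(`. -/
def wUnpaired (i : ℕ) (w : List (ℕ × Bool)) : List ℕ :=
  let r := ((List.range w.length).zip w).foldl (fun (st : List ℕ × List ℕ) p =>
    if p.2.1 = i + 1 then (p.1 :: st.1, st.2)
    else if p.2.1 = i then
      match st.1 with
      | _o :: os => (os, st.2)
      | [] => (st.1, p.1 :: st.2)
    else st) ([], [])
  r.2.reverse ++ r.1.reverse

def wordF (n i : ℕ) (w : List (ℕ × Bool)) : Option (List (ℕ × Bool)) :=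
  if 1 ≤ i ∧ i ≤ n - 1 then
    match ((wUnpaired i w).filter (fun j => (w.getD j default).1 == i)).getLast? with
    | none => none
    | some j => some (w.set j (i + 1, (w.getD j default).2))
  else none

def wordE (n i : ℕ) (w : List (ℕ × Bool)) : Option (List (ℕ × Bool)) :=
  if 1 ≤ i ∧ i ≤ n - 1 then
    match ((wUnpaired i w).filter (fun j => (w.getD j default).1 == i + 1)).head? with
    | none => none
    | some j => some (w.set j (i, (w.getD j default).2))
  else none

def wordFbar (n : ℕ) (w : List (ℕ × Bool)) : Option (List (ℕ × Bool)) :=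
  if 2 ≤ n then
    match w.findIdx? (fun l => l.1 == 1) with
    | none => none
    | some j =>
      if (w.take j).any (fun l => l.1 == 2) then none
      else
        match (w.drop (j + 1)).findIdx? (fun l => l.1 == 1) with
        | none => some (w.set j (2, (w.getD j default).2))
        | some k' =>
          let k := j + 1 + k'
          let a := w.getD j default
          let b := w.getD k default
          if a.2 = b.2 then some (w.set j (2, a.2))
          else if a.2 = false then some ((w.set j (2, true)).set k (1, false))
          else some ((w.set j (2, false)).set k (1, true))
  else none

def wordEbar (n : ℕ) (w : List (ℕ × Bool)) : Option (List (ℕ × Bool)) :=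
  if 2 ≤ n then
    match w.findIdx? (fun l => l.1 == 2) with
    | none => none
    | some j =>
      if (w.take j).any (fun l => l.1 == 1) then none
      else
        match (w.drop (j + 1)).findIdx? (fun l => l.1 == 1) with
        | none => some (w.set j (1, (w.getD j default).2))
        | some k' =>
          let k := j + 1 + k'
          let a := w.getD j default
          let b := w.getD k default
          if a.2 = b.2 then some (w.set j (1, a.2))
          else if a.2 = true then some ((w.set j (1, false)).set k (1, true))
          else some ((w.set j (1, true)).set k (1, false))
  else none

def wordF0 (w : List (ℕ × Bool)) : Option (List (ℕ × Bool)) :=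
  match w.findIdx? (fun l => l.1 == 1) with
  | some j => if (w.getD j default).2 = false then some (w.set j (1, true)) else none
  | none => none

def wordE0 (w : List (ℕ × Bool)) : Option (List (ℕ × Bool)) :=
  match w.findIdx? (fun l => l.1 == 1) with
  | some j => if (w.getD j default).2 = true then some (w.set j (1, false)) else none
  | none => none

/-- Membership in `W⁺_n(m)`. -/
def WordP (n m : ℕ) (w : List (ℕ × Bool)) : Prop :=
  w.length = m ∧ ∀ l ∈ w, 1 ≤ l.1 ∧ l.1 ≤ n

/-- The `q⁺_n`-crystal of words `W⁺_n(m)`. -/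
noncomputable def wordC (n m : ℕ) : Crystal n (Subtype (WordP n m)) where
  wt := fun w k =>
    if 1 ≤ k ∧ k ≤ n then ((w.1.filter (fun l => l.1 == k)).length : ℤ) else 0
  e := fun i => restrictP _ (wordE n i)
  f := fun i => restrictP _ (wordF n i)
  ebar := restrictP _ (wordEbar n)
  fbar := restrictP _ (wordFbar n)
  e0 := restrictP _ wordE0
  f0 := restrictP _ wordF0

/-- Interpret a word as an element of `(𝔹⁺_n)^{⊗m}`. -/
def toPow : (m : ℕ) → List (ℕ × Bool) → PowT m
  | 0, _ => PUnit.unit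
  | m + 1, w => (toPow m w.dropLast, w.getLast?.getD (0, false))


/-! ### Involution words and increasing factorizations -/

/-- One step of the Demazure product. -/
def demStep (π : Equiv.Perm ℤ) (i : ℤ) : Equiv.Perm ℤ :=
  if π (i + 1) < π i then π else π * Equiv.swap i (i + 1)

/-- Demazure product `1 ∘ s_{a_1} ∘ ⋯ ∘ s_{a_m}`. -/
def dem (w : List ℤ) : Equiv.Perm ℤ := w.foldl demStep 1

/-- `s_{a_m} ∘ ⋯ ∘ s_{a_1} ∘ 1 ∘ s_{a_1} ∘ ⋯ ∘ s_{a_m}`. -/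
def invEnd (w : List ℤ) : Equiv.Perm ℤ := dem (w.reverse ++ w)

/-- `w` is an involution word for `z`. -/
def IsInvWord (z : Equiv.Perm ℤ) (w : List ℤ) : Prop :=
  invEnd w = z ∧ ∀ v : List ℤ, invEnd v = z → w.length ≤ v.length

/-- The (0-based) index `j` is a commutation of the involution word `w`. -/
def IsCommutation (w : List ℤ) (j : ℕ) : Prop :=
  invEnd (w.take j) (w.getD j 0) = w.getD j 0 ∧
  invEnd (w.take j) (w.getD j 0 + 1) = w.getD j 0 + 1

/-- Remove primes from a primed word. -/
def unpr (w : List PLetter) : List ℤ := w.map Prod.fst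

/-- `w` is a primed involution word for `z`. -/
def IsPrimedInvWord (z : Equiv.Perm ℤ) (w : List PLetter) : Prop :=
  IsInvWord z (unpr w) ∧
  ∀ j, j < w.length → (w.getD j default).2 = true → IsCommutation (unpr w) j

/-- Value of a primed letter, doubled: `i ↦ 2i`, `i′ ↦ 2i - 1`. -/
def pvZ (l : PLetter) : ℤ := 2 * l.1 - (if l.2 then 1 else 0)

def StrictIncrW (w : List PLetter) : Prop := List.Chain' (· < ·) (w.map pvZ)

/-- Concatenation `a¹a²⋯aⁿ` of a tuple of primed words. -/
def concatT {n : ℕ} (a : Fin n → List PLetter) : List PLetter := (List.ofFn a).flatten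

/-- Membership in `Incr⁺_n(z)`. -/
def IncrP (n : ℕ) (z : Equiv.Perm ℤ) (a : Fin n → List PLetter) : Prop :=
  (∀ i, StrictIncrW (a i)) ∧ IsPrimedInvWord z (concatT a)

/-- Letters of `v` left unpaired by the pairing of Definition 5.5. -/
def pairAvail (v w : List PLetter) : List PLetter :=
  w.reverse.foldl (fun avail wj =>
    match avail.find? (fun x => decide (wj.1 < x.1)) with
    | some x => avail.erase x
    | none => avail) v

/-- Letters of `w` left unpaired by the pairing of Definition 5.5 (in increasing order). -/
def unpairedSnd (v w : List PLetter) : List PLetter :=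
  (w.reverse.foldl (fun (st : List PLetter × List PLetter) wj =>
    match st.1.find? (fun x => decide (wj.1 < x.1)) with
    | some x => (st.1.erase x, st.2)
    | none => (st.1, wj :: st.2)) (v, [])).2

def smallestAbsentAux : ℕ → ℤ → List ℤ → ℤ
  | 0, y, _ => y
  | fuel + 1, y, s => if y ∈ s then smallestAbsentAux fuel (y + 1) s else y

/-- The smallest integer `≥ y` not occurring in `s`. -/
def smallestAbsent (y : ℤ) (s : List ℤ) : ℤ := smallestAbsentAux (s.length + 1) y s

def largestAbsentAux : ℕ → ℤ → List ℤ → ℤ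
  | 0, y, _ => y
  | fuel + 1, y, s => if y ∈ s then largestAbsentAux fuel (y - 1) s else y

/-- The largest integer `≤ y` not occurring in `s`. -/
def largestAbsent (y : ℤ) (s : List ℤ) : ℤ := largestAbsentAux (s.length + 1) y s

/-- Ordered insertion of a primed letter into a strictly increasing primed word. -/
def insLetter : PLetter → List PLetter → List PLetter
  | l, [] => [l]
  | l, x :: xs => if pvZ l ≤ pvZ x then l :: x :: xs else x :: insLetter l xs

/-- Prime adjustment in case (L2) of Definition 5.6. -/
def adjustF (x y : ℤ) (p : List PLetter × List PLetter) : List PLetter × List PLetter :=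
  (List.range (y - x).toNat).foldl (fun q k =>
    let t : ℤ := x + k
    if ((t + 1, false) : PLetter) ∈ q.1 ∧ ((t, true) : PLetter) ∈ q.2 then
      (q.1.map (fun l => if l = ((t + 1, false) : PLetter) then (t + 1, true) else l),
       q.2.map (fun l => if l = ((t, true) : PLetter) then (t, false) else l))
    else q) p

/-- Prime adjustment in case (R2) of Definition 5.7. -/
def adjustE (x y : ℤ) (p : List PLetter × List PLetter) : List PLetter × List PLetter :=
  (List.range (y - x).toNat).foldl (fun q k =>
    let t : ℤ := x + k
    if ((t + 1, true) : PLetter) ∈ q.1 ∧ ((t, false) : PLetter) ∈ q.2 then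
      (q.1.map (fun l => if l = ((t + 1, true) : PLetter) then (t + 1, false) else l),
       q.2.map (fun l => if l = ((t, false) : PLetter) then (t, true) else l))
    else q) p

def upd2 {n : ℕ} (a : Fin n → List PLetter) (i : Fin n) (v : List PLetter)
    (j : Fin n) (w : List PLetter) : Fin n → List PLetter :=
  Function.update (Function.update a i v) j w

/-- The lowering operator `f_i` on increasing factorizations (Definition 5.6). -/
def rawIncrF (n i : ℕ) (a : Fin n → List PLetter) : Option (Fin n → List PLetter) :=
  if h : 1 ≤ i ∧ i ≤ n - 1 then
    let i1 : Fin n := ⟨i - 1, by omega⟩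
    let i2 : Fin n := ⟨i, by omega⟩
    let v := a i1
    let w := a i2
    match (pairAvail v w).getLast? with
    | none => none
    | some x =>
      let y := smallestAbsent x.1 (unpr w)
      if x.2 then
        some (upd2 a i1 (v.erase x) i2 (insLetter (y, true) w))
      else
        let p := adjustF x.1 y (v.erase x, insLetter (y, false) w)
        some (upd2 a i1 p.1 i2 p.2)
  else none

/-- The raising operator `e_i` on increasing factorizations (Definition 5.7). -/
def rawIncrE (n i : ℕ) (a : Fin n → List PLetter) : Option (Fin n → List PLetter) :=
  if h : 1 ≤ i ∧ i ≤ n - 1 then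
    let i1 : Fin n := ⟨i - 1, by omega⟩
    let i2 : Fin n := ⟨i, by omega⟩
    let v := a i1
    let w := a i2
    match (unpairedSnd v w).getLast? with
    | none => none
    | some y =>
      let x := largestAbsent y.1 (unpr v)
      if y.2 then
        some (upd2 a i1 (insLetter (x, true) v) i2 (w.erase y))
      else
        let p := adjustE x y.1 (insLetter (x, false) v, w.erase y)
        some (upd2 a i1 p.1 i2 p.2)
  else none

/-- The lowering operator `f_1̄` on increasing factorizations (Definition 5.8). -/
def rawIncrFbar (n : ℕ) (a : Fin n → List PLetter) : Option (Fin n → List PLetter) :=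
  if h : 2 ≤ n then
    let i1 : Fin n := ⟨0, by omega⟩
    let i2 : Fin n := ⟨1, by omega⟩
    match a i1 with
    | [] => none
    | l :: rest =>
      if (a i2).all (fun m => decide (pvZ l < pvZ m)) then
        match rest with
        | r :: rs =>
          if l.2 ≠ r.2 then
            some (upd2 a i1 ((r.1, !r.2) :: rs) i2 ((l.1, !l.2) :: a i2))
          else some (upd2 a i1 rest i2 (l :: a i2))
        | [] => some (upd2 a i1 [] i2 (l :: a i2))
      else none
  else none

/-- The raising operator `e_1̄` on increasing factorizations (Definition 5.9). -/
def rawIncrEbar (n : ℕ) (a : Fin n → List PLetter) : Option (Fin n → List PLetter) :=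
  if h : 2 ≤ n then
    let i1 : Fin n := ⟨0, by omega⟩
    let i2 : Fin n := ⟨1, by omega⟩
    match a i2 with
    | [] => none
    | l :: rest2 =>
      if (a i1).all (fun m => decide (pvZ l < pvZ m)) then
        match a i1 with
        | r :: rs =>
          if l.2 ≠ r.2 then
            some (upd2 a i1 ((l.1, !l.2) :: (r.1, !r.2) :: rs) i2 rest2)
          else some (upd2 a i1 (l :: a i1) i2 rest2)
        | [] => some (upd2 a i1 [l] i2 rest2)
      else none
  else none

/-- The operator `f_0` on increasing factorizations (Definition 5.10). -/
def rawIncrF0 (n : ℕ) (a : Fin n → List PLetter) : Option (Fin n → List PLetter) :=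
  if h : 1 ≤ n then
    let i1 : Fin n := ⟨0, by omega⟩
    match a i1 with
    | [] => none
    | l :: rest =>
      if l.2 = false then some (Function.update a i1 ((l.1, true) :: rest)) else none
  else none

/-- The operator `e_0` on increasing factorizations (Definition 5.10). -/
def rawIncrE0 (n : ℕ) (a : Fin n → List PLetter) : Option (Fin n → List PLetter) :=
  if h : 1 ≤ n then
    let i1 : Fin n := ⟨0, by omega⟩
    match a i1 with
    | [] => none
    | l :: rest =>
      if l.2 = true then some (Function.update a i1 ((l.1, false) :: rest)) else none
  else none

/-- The `q⁺_n`-crystal `Incr⁺_n(z)`. -/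
noncomputable def incrC (n : ℕ) (z : Equiv.Perm ℤ) : Crystal n (Subtype (IncrP n z)) where
  wt := fun a k => if h : 1 ≤ k ∧ k ≤ n then ((a.1 ⟨k - 1, by omega⟩).length : ℤ) else 0
  e := fun i => restrictP _ (rawIncrE n i)
  f := fun i => restrictP _ (rawIncrF n i)
  ebar := restrictP _ (rawIncrEbar n)
  fbar := restrictP _ (rawIncrFbar n)
  e0 := restrictP _ (rawIncrE0 n)
  f0 := restrictP _ (rawIncrF0 n)


/-! ### Coxeter-Knuth operators, marked cycles, descents -/

/-- The action of `ock` on a 3-letter window. -/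
def ockTriple (a b c : PLetter) : PLetter × PLetter × PLetter :=
  if a.1 = c.1 ∧ (b.1 = a.1 + 1 ∨ b.1 + 1 = a.1) ∧ b.2 = false ∧ ¬(a.2 = true ∧ c.2 = true) then
    ((b.1, c.2), (a.1, false), (b.1, a.2))
  else if (a.1 < c.1 ∧ c.1 < b.1) ∨ (b.1 < c.1 ∧ c.1 < a.1) then (b, a, c)
  else if (c.1 < a.1 ∧ a.1 < b.1) ∨ (b.1 < a.1 ∧ a.1 < c.1) then (a, c, b)
  else (a, b, c)

/-- The orthogonal Coxeter-Knuth operator `ock_i` (with 1-based window positions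
`i, i+1, i+2` for `i ≥ 1`, and the initial-2-letter rule for `i = 0`). -/
def ock (i : ℕ) (w : List PLetter) : List PLetter :=
  if i = 0 then
    match w with
    | x :: y :: rest => (y.1, x.2) :: (x.1, y.2) :: rest
    | _ => w
  else if i + 2 ≤ w.length then
    let a := w.getD (i - 1) default
    let b := w.getD i default
    let c := w.getD (i + 1) default
    let t := ockTriple a b c
    w.take (i - 1) ++ [t.1, t.2.1, t.2.2] ++ w.drop (i + 2)
  else w

/-- The cycle `γ_j(w) = s_{w_m} ⋯ s_{w_{j+2}} s_{w_{j+1}} ({w_j, w_j + 1})` (0-based `j`). -/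
def gammaCyc (w : List ℤ) (j : ℕ) : Set ℤ :=
  let P : Equiv.Perm ℤ := (((w.drop (j + 1)).reverse).map (fun t => Equiv.swap t (t + 1))).prod
  {P (w.getD j 0), P (w.getD j 0 + 1)}

/-- The set of marked cycles of a primed involution word. -/
def markedOf (w : List PLetter) : Set (Set ℤ) :=
  {S | ∃ j, j < w.length ∧ (w.getD j default).2 = true ∧ S = gammaCyc (unpr w) j}

/-- Descent set of a primed word (1-based positions). -/
def DesSet (w : List PLetter) : Set ℕ :=
  {i | 1 ≤ i ∧ i + 1 ≤ w.length ∧ pvZ (w.getD i default) < pvZ (w.getD (i - 1) default)}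

/-! ### Unprimed pairing and reduced words (Lemmas 5.3 and 5.6) -/

/-- Letters of `v` left unpaired by the pairing of Definition 5.5, unprimed version. -/
def pairAvailZ (v w : List ℤ) : List ℤ :=
  w.reverse.foldl (fun avail wj =>
    match avail.find? (fun x => decide (wj < x)) with
    | some x => avail.erase x
    | none => avail) v

/-- The permutation `s_{a_1} s_{a_2} ⋯ s_{a_m}`. -/
def permOf (w : List ℤ) : Equiv.Perm ℤ := (w.map (fun i => Equiv.swap i (i + 1))).prod

/-- `w` is a reduced word (for some element of `S_ℤ`). -/
def IsReducedWord (w : List ℤ) : Prop :=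
  ∀ v : List ℤ, permOf v = permOf w → w.length ≤ v.length

/-- Ordered insertion of an integer into a strictly increasing integer word. -/
def insLetterZ : ℤ → List ℤ → List ℤ
  | x, [] => [x]
  | x, y :: ys => if x ≤ y then x :: y :: ys else y :: insLetterZ x ys


/-! ### Semistandard shifted tableaux and their crystal operators -/

/-- Doubled value of a tableau letter: `k ↦ 2k`, `k′ ↦ 2k - 1`. -/
def pvN (l : NLet) : ℤ := 2 * (l.1 : ℤ) - (if l.2 then 1 else 0)

/-- `lam` is a strict partition with at most `n` parts (coordinates `1,…,n`). -/
def IsStrictPart (n : ℕ) (lam : ℕ → ℕ) : Prop :=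
  (∀ i, i = 0 ∨ n < i → lam i = 0) ∧
  (∀ i, 1 ≤ i → (lam (i + 1) < lam i ∨ (lam i = 0 ∧ lam (i + 1) = 0)))

/-- Membership of a (1-based) box in the shifted diagram of `lam`. -/
abbrev InSD (lam : ℕ → ℕ) (p : ℕ × ℕ) : Prop :=
  1 ≤ p.1 ∧ p.1 ≤ p.2 ∧ p.2 < p.1 + lam p.1

/-- `T` is a semistandard shifted tableau of shape `lam` with entries at most `n`. -/
def IsShTab (n : ℕ) (lam : ℕ → ℕ) (T : Tab) : Prop :=
  (∀ p : ℕ × ℕ, (T p).isSome ↔ InSD lam p) ∧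
  (∀ p v, T p = some v → 1 ≤ v.1 ∧ v.1 ≤ n) ∧
  (∀ i j v w, T (i, j) = some v → T (i, j + 1) = some w →
    pvN v ≤ pvN w ∧ (pvN v = pvN w → v.2 = false)) ∧
  (∀ i j v w, T (i, j) = some v → T (i + 1, j) = some w →
    pvN v ≤ pvN w ∧ (pvN v = pvN w → v.2 = true))

def setE (T : Tab) (q : ℕ × ℕ) (l : NLet) : Tab := fun p => if p = q then some l else T p

def ceilIs (T : Tab) (q : ℕ × ℕ) (v : ℕ) : Bool :=
  match T q with
  | some l => l.1 == v
  | none => false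

/-- Boxes of `T` with entries in `{i′, i, (i+1)′, i+1}`, in shifted reading order. -/
def readBoxes (T : Tab) (i bnd : ℕ) : List (ℕ × ℕ) :=
  ((List.range bnd).reverse.map (fun k0 =>
    let k := k0 + 1
    ((List.range bnd).filterMap (fun r0 =>
      let r := r0 + 1
      match T (r, k) with
      | some (v, true) => if v = i ∨ v = i + 1 then some ((r, k) : ℕ × ℕ) else none
      | _ => none)) ++
    ((List.range bnd).filterMap (fun c0 =>
      let c := c0 + 1
      match T (k, c) with
      | some (v, false) => if v = i ∨ v = i + 1 then some ((k, c) : ℕ × ℕ) else none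
      | _ => none)))).flatten

/-- Unpaired boxes after the parenthesis matching (entries `i` are `)`, `i+1` are `(`). -/
def bracketBoxes (T : Tab) (i : ℕ) (l : List (ℕ × ℕ)) : List (ℕ × ℕ) :=
  let r := l.foldl (fun (st : List (ℕ × ℕ) × List (ℕ × ℕ)) q =>
    if ceilIs T q (i + 1) then (q :: st.1, st.2)
    else
      match st.1 with
      | _o :: os => (os, st.2)
      | [] => (st.1, q :: st.2)) ([], [])
  r.2.reverse ++ r.1.reverse

/-- Most-northwest box of the ribbon (within `inSet`) containing the given box. -/
def nwEnd (inSet : ℕ × ℕ → Bool) : ℕ → ℕ × ℕ → ℕ × ℕ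
  | 0, p => p
  | fuel + 1, p =>
    if inSet (p.1 + 1, p.2) = true then nwEnd inSet fuel (p.1 + 1, p.2)
    else if 1 ≤ p.2 ∧ inSet (p.1, p.2 - 1) = true then nwEnd inSet fuel (p.1, p.2 - 1)
    else p

/-- Walk southeast through a ribbon looking for the first box satisfying `pred`. -/
def seFind (inSet pred : ℕ × ℕ → Bool) : ℕ → ℕ × ℕ → Option (ℕ × ℕ)
  | 0, _ => none
  | fuel + 1, p =>
    if pred p = true then some p
    else if 2 ≤ p.1 ∧ inSet (p.1 - 1, p.2) = true then seFind inSet pred fuel (p.1 - 1, p.2)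
    else if inSet (p.1, p.2 + 1) = true then seFind inSet pred fuel (p.1, p.2 + 1)
    else none

/-- Interchange the primes on the entries in boxes `p` and `q`. -/
def swapPr (T : Tab) (p q : ℕ × ℕ) : Tab :=
  match T p, T q with
  | some a, some b => if a.2 ≠ b.2 then setE (setE T p (a.1, b.2)) q (b.1, a.2) else T
  | _, _ => T

/-- The lowering operator `f_i` on shifted tableaux (Definition 6.4). -/
def tabF (n bnd i : ℕ) (T : Tab) : Option Tab :=
  if 1 ≤ i ∧ i ≤ n - 1 then
    match ((bracketBoxes T i (readBoxes T i bnd)).filter (fun q => ceilIs T q i)).getLast? with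
    | none => none
    | some q =>
      let x := q.1
      let y := q.2
      match T q with
      | some (_, false) =>
        if T (x, y + 1) = some (i + 1, true) then
          some (setE (setE T q (i + 1, true)) (x, y + 1) (i + 1, false))
        else if ¬(ceilIs T (x + 1, y) (i + 1) = true) then
          some (setE T q (i + 1, false))
        else
          let nw := nwEnd (fun r => ceilIs T r (i + 1)) (2 * bnd + 2) (x + 1, y)
          if nw.1 ≠ nw.2 then
            some (setE (setE T q (i + 1, true)) nw (i + 1, false))
          else
            some (swapPr (setE T q (i + 1, true)) (nw.1, nw.1) (nw.1 - 1, nw.1 - 1))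
      | some (_, true) =>
        if T (x + 1, y) = some (i, false) then
          some (setE (setE T q (i, false)) (x + 1, y) (i + 1, true))
        else if ¬(T (x, y + 1) = some (i, false) ∨ T (x, y + 1) = some (i + 1, true)) then
          some (setE T q (i + 1, true))
        else
          match seFind (fun r => ceilIs T r i)
              (fun r => decide (T r = some (i, false) ∧
                ¬(T (r.1, r.2 + 1) = some (i, false) ∨ T (r.1, r.2 + 1) = some (i + 1, true))))
              (2 * bnd + 2) q with
          | some r => some (setE (setE T q (i, false)) r (i + 1, true))
          | none => none
      | none => none
  else none

/-- The lowering operator `f_1̄` on shifted tableaux (Definition 6.7). -/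
def tabFbar (n bnd : ℕ) (T : Tab) : Option Tab :=
  if 2 ≤ n then
    let row1 : List (ℕ × ℕ) := (List.range bnd).map (fun c => (1, c + 1))
    if row1.any (fun q => decide (T q = some (2, true))) then none
    else
      match (row1.filter (fun q => ceilIs T q 1)).getLast? with
      | none => none
      | some q =>
        if q.1 = q.2 ∧ T q = some (1, false) then some (setE T q (2, false))
        else some (setE T q (2, true))
  else none

/-- The operator `f_0` on shifted tableaux. -/
def tabF0 (T : Tab) : Option Tab :=
  if T (1, 1) = some (1, false) then some (setE T (1, 1) (1, true))
  else none

/-- The operator `e_0` on shifted tableaux. -/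
def tabE0 (T : Tab) : Option Tab :=
  if T (1, 1) = some (1, true) then some (setE T (1, 1) (1, false))
  else none

-- Partial inverse of a partial operator, via choice.
open Classical in
noncomputable def pInv {α : Type} (g : α → Option α) (y : α) : Option α :=
  if h : ∃ x, g x = some y then some h.choose else none

/-- The underlying type of `ShTab⁺_n(lam)`. -/
def ShTy (n : ℕ) (lam : ℕ → ℕ) : Type := Subtype (IsShTab n lam)

/-- The `q⁺_n`-crystal `ShTab⁺_n(lam)`. -/
noncomputable def shtabC (n : ℕ) (lam : ℕ → ℕ) : Crystal n (ShTy n lam) :=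
  let bnd := n + lam 1 + 2
  let fop : ℕ → ShTy n lam → Option (ShTy n lam) := fun i => restrictP _ (tabF n bnd i)
  let fbarop : ShTy n lam → Option (ShTy n lam) := restrictP _ (tabFbar n bnd)
  { wt := fun T k =>
      if 1 ≤ k ∧ k ≤ n then
        (((List.range bnd).map (fun r =>
          ((List.range bnd).filter (fun c => ceilIs T.1 (r + 1, c + 1) k)).length)).sum : ℤ)
      else 0
    f := fop
    e := fun i => pInv (fop i)
    fbar := fbarop
    ebar := pInv fbarop
    f0 := restrictP _ tabF0
    e0 := restrictP _ tabE0 }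

/-- The tableau `T^highest_lam`, with every entry in row `i` equal to `i`. -/
def highestTab (lam : ℕ → ℕ) : Tab := fun p => if InSD lam p then some (p.1, false) else none

def shiftLam (lam : ℕ → ℕ) (k : ℕ) : ℕ → ℕ := fun i => lam (i + k)

/-- The defining property of `T^lowest_lam`: a semistandard shifted tableau of shape `lam`
with no primed diagonal entries, whose entries on the `k`-th ribbon all equal
`(n-k)′` or `n-k`. -/
def IsLowestSpec (n : ℕ) (lam : ℕ → ℕ) (T : Tab) : Prop :=
  IsShTab n lam T ∧
  (∀ i v, T (i, i) = some v → v.2 = false) ∧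
  (∀ k, k < n → ∀ p : ℕ × ℕ, InSD (shiftLam lam k) p → ¬InSD (shiftLam lam (k + 1)) p →
    ∀ v, T p = some v → v.1 = n - k)

/-- Add a prime to every diagonal entry. -/
def primeDiag (T : Tab) : Tab := fun p =>
  if p.1 = p.2 then (T p).map (fun l => (l.1, true)) else T p


/-! ### Orthogonal Edelman-Greene insertion -/

def setZ (T : ZTab) (q : ℕ × ℕ) (l : PLetter) : ZTab := fun p => if p = q then some l else T p

def swapPrZ (T : ZTab) (p q : ℕ × ℕ) : ZTab :=
  match T p, T q with
  | some a, some b => if a.2 ≠ b.2 then setZ (setZ T p (a.1, b.2)) q (b.1, a.2) else T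
  | _, _ => T

/-- One insertion of a letter into a shifted tableau, per Definition 7.1; returns the
resulting tableau, the box added, and whether the process ended in column insertion. -/
def oegIns (bnd : ℕ) : ℕ → ZTab → Bool → ℕ → PLetter → ZTab × ((ℕ × ℕ) × Bool)
  | 0, T, isCol, _, _ => (T, ((0, 0), isCol))
  | fuel + 1, T, isCol, k, x =>
    let cells : List (ℕ × ℕ) :=
      if isCol then (List.range bnd).map (fun r => (r + 1, k))
      else (List.range bnd).map (fun c => (k, k + c))
    let filled := cells.filter (fun q => (T q).isSome)
    match filled.find? (fun q => decide (x.1 ≤ ((T q).getD default).1)) with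
    | none =>
      match cells.find? (fun q => (T q).isNone) with
      | none => (T, ((0, 0), isCol))
      | some q =>
        if q.1 = q.2 then (setZ T q (x.1, false), (q, isCol || x.2))
        else (setZ T q x, (q, isCol))
    | some qy =>
      let y := (T qy).getD default
      if y.1 = x.1 then
        let T' := match filled.find? (fun q => decide (x.1 < ((T q).getD default).1)) with
          | some qt => swapPrZ T qy qt
          | none => T
        oegIns bnd fuel T' (decide (qy.1 = qy.2)) (k + 1) (x.1 + 1, x.2)
      else
        if qy.1 = qy.2 then
          oegIns bnd fuel (setZ T qy (x.1, false)) true (k + 1) (y.1, y.2 || x.2)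
        else
          oegIns bnd fuel (setZ T qy x) false (k + 1) y

def emptyZTab : ZTab := fun _ => none
def emptyTab : Tab := fun _ => none

/-- The orthogonal Edelman-Greene insertion and recording tableaux `(P^O_EG(a), Q^O_EG(a))`. -/
def oegPQ (n : ℕ) (a : Fin n → List PLetter) : ZTab × Tab :=
  let letters : List (PLetter × ℕ) :=
    (List.ofFn (fun i : Fin n => (a i).map (fun l => (l, (i : ℕ) + 1)))).flatten
  let bnd := letters.length + 2
  letters.foldl (fun (PQ : ZTab × Tab) xl =>
    let r := oegIns bnd bnd PQ.1 false 1 xl.1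
    (r.1, setE PQ.2 r.2.1 (xl.2, r.2.2))) (emptyZTab, emptyTab)

def oegP (n : ℕ) (a : Fin n → List PLetter) : ZTab := (oegPQ n a).1
def oegQ (n : ℕ) (a : Fin n → List PLetter) : Tab := (oegPQ n a).2

/-! ### Disjoint unions of crystals -/

def sigmaC {n : ℕ} {ι : Type} {β : ι → Type} (Cf : ∀ i, Crystal n (β i)) :
    Crystal n (Σ i, β i) where
  wt := fun x => (Cf x.1).wt x.2
  e := fun k x => ((Cf x.1).e k x.2).map (fun b => ⟨x.1, b⟩)
  f := fun k x => ((Cf x.1).f k x.2).map (fun b => ⟨x.1, b⟩)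
  ebar := fun x => ((Cf x.1).ebar x.2).map (fun b => ⟨x.1, b⟩)
  fbar := fun x => ((Cf x.1).fbar x.2).map (fun b => ⟨x.1, b⟩)
  e0 := fun x => ((Cf x.1).e0 x.2).map (fun b => ⟨x.1, b⟩)
  f0 := fun x => ((Cf x.1).f0 x.2).map (fun b => ⟨x.1, b⟩)

/-- Involutions in `S_ℤ` (finitely supported permutations of `ℤ`). -/
def IZ : Type := {z : Equiv.Perm ℤ // z * z = 1 ∧ {i : ℤ | z i ≠ i}.Finite}

/-- The disjoint union `⊔_z Incr⁺_n(z)` over all involutions `z ∈ S_ℤ`. -/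
def DomT (n : ℕ) : Type := Σ z : IZ, Subtype (IncrP n z.1)

noncomputable def domC (n : ℕ) : Crystal n (DomT n) := sigmaC (fun z : IZ => incrC n z.1)

/-- Strict partitions in `ℕ^n`. -/
def SPart (n : ℕ) : Type := {lam : ℕ → ℕ // IsStrictPart n lam}

/-- The disjoint union `⊔_lam ShTab⁺_n(lam)` over all strict partitions `lam ∈ ℕ^n`. -/
def CodT (n : ℕ) : Type := Σ lam : SPart n, ShTy n lam.1

noncomputable def codC (n : ℕ) : Crystal n (CodT n) := sigmaC (fun lam : SPart n => shtabC n lam.1)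


open Crystal

section InvDev
variable {n : ℕ} {B B' : Type}

/-- Invariant satisfied by tensor powers of the standard crystal. -/
structure InvC (C : Crystal n B) : Prop where
  wt_nonneg : ∀ x j, 0 ≤ C.wt x j
  e0_none : ∀ x, C.wt x 1 = 0 → C.e0 x = none
  f0_none : ∀ x, C.wt x 1 = 0 → C.f0 x = none
  e0_wt : ∀ x y, C.e0 x = some y → ∀ j, C.wt y j = C.wt x j
  e0_f0 : ∀ x y, C.e0 x = some y → C.f0 y = some x
  e0_e0 : ∀ x y, C.e0 x = some y → C.e0 y = none
  e0_ebar : ∀ x y, C.e0 x = some y → (C.ebar y).isSome = (C.ebar x).isSome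
  f0_e0 : ∀ x y, C.f0 x = some y → C.e0 y = some x
  f0_f0 : ∀ x y, C.f0 x = some y → C.f0 y = none
  ebar_wt1 : ∀ x y, C.ebar x = some y → C.wt y 1 = C.wt x 1 + 1
  ebar_wt2 : ∀ x y, C.ebar x = some y → C.wt x 2 = C.wt y 2 + 1
  tot : ∀ x, C.wt x 1 ≠ 0 → (C.e0 x).isSome ∨ (C.f0 x).isSome
  excl : ∀ x, (C.e0 x).isSome → C.f0 x = none
  comm_e : ∀ x, C.wt x 1 ≠ 0 → (C.e0 x).bind C.ebar = (C.ebar x).bind C.e0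
  comm_f : ∀ x, C.wt x 1 ≠ 0 → (C.f0 x).bind C.ebar = (C.ebar x).bind C.f0

lemma InvC.f0_wt {C : Crystal n B} (h : InvC C) :
    ∀ x y, C.f0 x = some y → ∀ j, C.wt y j = C.wt x j :=
  fun x y hf j => (h.e0_wt y x (h.f0_e0 x y hf) j).symm

lemma InvC.f0_ebar {C : Crystal n B} (h : InvC C) :
    ∀ x y, C.f0 x = some y → (C.ebar y).isSome = (C.ebar x).isSome :=
  fun x y hf => (h.e0_ebar y x (h.f0_e0 x y hf)).symm

lemma InvC.f0_of_not_e0 {C : Crystal n B} (h : InvC C) {x : B} (hx : C.wt x 1 ≠ 0)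
    (he : C.e0 x = none) : (C.f0 x).isSome := by
  rcases h.tot x hx with h1 | h1
  · rw [he] at h1; simp at h1
  · exact h1

lemma InvC.e0_of_f0_some {C : Crystal n B} (h : InvC C) {x y : B} (hf : C.f0 x = some y) :
    C.e0 x = none := by
  by_contra hne
  rw [h.excl x (Option.ne_none_iff_isSome.1 hne)] at hf
  cases hf

lemma invC_unit : InvC (unitC n) := by
  constructor <;> intro x <;> simp [unitC]

lemma invC_std : InvC (stdC n) := by
  have hwt : ∀ (x : Std) (j : ℕ), (stdC n).wt x j = if j = x.1 ∧ 1 ≤ x.1 ∧ x.1 ≤ n then 1 else 0 :=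
    fun x j => rfl
  have he0 : ∀ x : Std, (stdC n).e0 x = if 1 ≤ n ∧ x = (1, true) then some (1, false) else none :=
    fun x => rfl
  have hf0 : ∀ x : Std, (stdC n).f0 x = if 1 ≤ n ∧ x = (1, false) then some (1, true) else none :=
    fun x => rfl
  have hebar : ∀ x : Std, (stdC n).ebar x = if 2 ≤ n ∧ x.1 = 2 then some (1, x.2) else none :=
    fun x => rfl
  have hwt1 : ∀ x : Std, ((stdC n).wt x 1 = 0 ↔ ¬(1 = x.1 ∧ 1 ≤ x.1 ∧ x.1 ≤ n)) := by
    intro x; rw [hwt]; split <;> simp_all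
  constructor
  · intro x j; rw [hwt]; split <;> norm_num
  · intro x h
    rw [hwt1] at h
    rw [he0, if_neg]
    rintro ⟨h1, rfl⟩
    exact h (by simp; omega)
  · intro x h
    rw [hwt1] at h
    rw [hf0, if_neg]
    rintro ⟨h1, rfl⟩
    exact h (by simp; omega)
  · intro x y h j
    rw [he0] at h
    split at h
    · next hc =>
      obtain ⟨h1, rfl⟩ := hc
      obtain rfl : ((1 : ℕ), false) = y := by simpa using h
      simp [hwt]
    · cases h
  · intro x y h
    rw [he0] at h
    split at h
    · next hc =>
      obtain ⟨h1, rfl⟩ := hc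
      obtain rfl : ((1 : ℕ), false) = y := by simpa using h
      rw [hf0, if_pos ⟨h1, rfl⟩]
    · cases h
  · intro x y h
    rw [he0] at h
    split at h
    · next hc =>
      obtain ⟨h1, rfl⟩ := hc
      obtain rfl : ((1 : ℕ), false) = y := by simpa using h
      rw [he0, if_neg (by simp)]
    · cases h
  · intro x y h
    rw [he0] at h
    split at h
    · next hc =>
      obtain ⟨h1, rfl⟩ := hc
      obtain rfl : ((1 : ℕ), false) = y := by simpa using h
      simp [hebar]
    · cases h
  · intro x y h
    rw [hf0] at h
    split at h
    · next hc =>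
      obtain ⟨h1, rfl⟩ := hc
      obtain rfl : ((1 : ℕ), true) = y := by simpa using h
      rw [he0, if_pos ⟨h1, rfl⟩]
    · cases h
  · intro x y h
    rw [hf0] at h
    split at h
    · next hc =>
      obtain ⟨h1, rfl⟩ := hc
      obtain rfl : ((1 : ℕ), true) = y := by simpa using h
      rw [hf0, if_neg (by simp)]
    · cases h
  · intro x y h
    rw [hebar] at h
    split at h
    · next hc =>
      obtain ⟨h1, h2⟩ := hc
      obtain rfl : ((1 : ℕ), x.2) = y := by simpa using h
      simp only [hwt]
      rw [if_pos (by simp; omega), if_neg (by simp [h2])]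
      norm_num
    · cases h
  · intro x y h
    rw [hebar] at h
    split at h
    · next hc =>
      obtain ⟨h1, h2⟩ := hc
      obtain rfl : ((1 : ℕ), x.2) = y := by simpa using h
      simp only [hwt]
      rw [if_pos (by simp [h2]; omega), if_neg (by simp)]
      norm_num
    · cases h
  · intro x h
    have hc : 1 = x.1 ∧ 1 ≤ x.1 ∧ x.1 ≤ n := by
      by_contra hc
      exact h ((hwt1 x).2 hc)
    obtain ⟨a, b⟩ := x
    obtain rfl : a = 1 := hc.1.symm
    cases b
    · right; rw [hf0, if_pos ⟨hc.2.2, rfl⟩]; rfl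
    · left; rw [he0, if_pos ⟨hc.2.2, rfl⟩]; rfl
  · intro x h
    rw [he0] at h
    split at h
    · next hc =>
      obtain ⟨h1, rfl⟩ := hc
      rw [hf0, if_neg (by simp)]
    · simp at h
  · intro x h
    have hx1 : x.1 = 1 := by
      by_contra hne
      exact h ((hwt1 x).2 (by tauto))
    have hb : (stdC n).ebar x = none := by rw [hebar, if_neg (by simp [hx1])]
    rw [hb]
    rw [he0]
    split
    · simp [hebar]
    · simp
  · intro x h
    have hx1 : x.1 = 1 := by
      by_contra hne
      exact h ((hwt1 x).2 (by tauto))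
    have hb : (stdC n).ebar x = none := by rw [hebar, if_neg (by simp [hx1])]
    rw [hb]
    rw [hf0]
    split
    · simp [hebar]
    · simp

end InvDev

section TensorDev
variable {n : ℕ} {B B' : Type} {C : Crystal n B} {D : Crystal n B'}

lemma ten_wt (u : B) (l : B') (j : ℕ) :
    (tensor C D).wt (u, l) j = C.wt u j + D.wt l j := rfl

lemma ten_e0 (u : B) (l : B') :
    (tensor C D).e0 (u, l) =
      if C.wt u 1 ≠ 0 then (C.e0 u).map (fun b => (b, l))
      else (D.e0 l).map (fun c => (u, c)) := rfl

lemma ten_f0 (u : B) (l : B') :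
    (tensor C D).f0 (u, l) =
      if C.wt u 1 ≠ 0 then (C.f0 u).map (fun b => (b, l))
      else (D.f0 l).map (fun c => (u, c)) := rfl

lemma ten_e0_pos {u : B} (l : B') (h : C.wt u 1 ≠ 0) :
    (tensor C D).e0 (u, l) = (C.e0 u).map (fun b => (b, l)) := by
  rw [ten_e0, if_pos h]

lemma ten_e0_zero {u : B} (l : B') (h : C.wt u 1 = 0) :
    (tensor C D).e0 (u, l) = (D.e0 l).map (fun c => (u, c)) := by
  rw [ten_e0, if_neg (by simp [h])]

lemma ten_f0_pos {u : B} (l : B') (h : C.wt u 1 ≠ 0) :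
    (tensor C D).f0 (u, l) = (C.f0 u).map (fun b => (b, l)) := by
  rw [ten_f0, if_pos h]

lemma ten_f0_zero {u : B} (l : B') (h : C.wt u 1 = 0) :
    (tensor C D).f0 (u, l) = (D.f0 l).map (fun c => (u, c)) := by
  rw [ten_f0, if_neg (by simp [h])]

lemma ten_ebar_def (u : B) (l : B') :
    (tensor C D).ebar (u, l) =
      if C.wt u 1 = 0 ∧ C.wt u 2 = 0 then (D.ebar l).map (fun c => (u, c))
      else if h : C.wt u 1 = 0 ∧ ((C.ebar u).bind C.f0).isSome ∧ (D.e0 l).isSome then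
        some (((C.ebar u).bind C.f0).get h.2.1, (D.e0 l).get h.2.2)
      else if h : C.wt u 1 = 0 ∧ ((C.ebar u).bind C.e0).isSome ∧ (D.f0 l).isSome then
        some (((C.ebar u).bind C.e0).get h.2.1, (D.f0 l).get h.2.2)
      else (C.ebar u).map (fun b => (b, l)) := rfl

lemma ten_ebar_pos {u : B} (l : B') (h : C.wt u 1 ≠ 0) :
    (tensor C D).ebar (u, l) = (C.ebar u).map (fun b => (b, l)) := by
  rw [ten_ebar_def, if_neg (fun hc => h hc.1), dif_neg (fun hc => h hc.1),
    dif_neg (fun hc => h hc.1)]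

lemma ten_ebar_00 {u : B} (l : B') (h1 : C.wt u 1 = 0) (h2 : C.wt u 2 = 0) :
    (tensor C D).ebar (u, l) = (D.ebar l).map (fun c => (u, c)) := by
  rw [ten_ebar_def, if_pos ⟨h1, h2⟩]

lemma ten_ebar_c2 {u : B} {l : B'} (h1 : C.wt u 1 = 0) (h2 : C.wt u 2 ≠ 0)
    {w wf : B} {l' : B'} (hb : C.ebar u = some w) (hf : C.f0 w = some wf)
    (he : D.e0 l = some l') :
    (tensor C D).ebar (u, l) = some (wf, l') := by
  have hbf : (C.ebar u).bind C.f0 = some wf := by rw [hb]; exact hf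
  rw [ten_ebar_def, if_neg (by tauto)]
  rw [dif_pos ⟨h1, by rw [hbf]; rfl, by rw [he]; rfl⟩]
  simp [hbf, he]

lemma ten_ebar_c3 {u : B} {l : B'} (h1 : C.wt u 1 = 0) (h2 : C.wt u 2 ≠ 0)
    (hc2 : ¬(((C.ebar u).bind C.f0).isSome ∧ (D.e0 l).isSome))
    {w we : B} {l' : B'} (hb : C.ebar u = some w) (he : C.e0 w = some we)
    (hf : D.f0 l = some l') :
    (tensor C D).ebar (u, l) = some (we, l') := by
  have hbe : (C.ebar u).bind C.e0 = some we := by rw [hb]; exact he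
  rw [ten_ebar_def, if_neg (by tauto), dif_neg (by tauto)]
  rw [dif_pos ⟨h1, by rw [hbe]; rfl, by rw [hf]; rfl⟩]
  simp [hbe, hf]

lemma ten_ebar_last {u : B} {l : B'} (h1 : C.wt u 1 = 0)
    (hc2 : ¬(((C.ebar u).bind C.f0).isSome ∧ (D.e0 l).isSome))
    (hc3 : ¬(((C.ebar u).bind C.e0).isSome ∧ (D.f0 l).isSome))
    (h2 : C.wt u 2 ≠ 0) :
    (tensor C D).ebar (u, l) = (C.ebar u).map (fun b => (b, l)) := by
  rw [ten_ebar_def, if_neg (by tauto), dif_neg (by tauto), dif_neg (by tauto)]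

lemma ten_ebar_elim (hC : InvC C) (hD : InvC D) {u : B} {l : B'} {y : B × B'}
    (h : (tensor C D).ebar (u, l) = some y) :
    (∃ z, D.ebar l = some z ∧ y = (u, z)) ∨
    (∃ w w' z, C.ebar u = some w ∧
      ((C.f0 w = some w' ∧ D.e0 l = some z) ∨ (C.e0 w = some w' ∧ D.f0 l = some z)) ∧
      y = (w', z)) ∨
    (∃ w, C.ebar u = some w ∧ y = (w, l)) := by
  rw [ten_ebar_def] at h
  split_ifs at h with h1 h2 h3
  · obtain ⟨z, hz, hzz⟩ := Option.map_eq_some_iff.1 h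
    exact Or.inl ⟨z, hz, hzz.symm⟩
  · obtain ⟨w', hw'⟩ := Option.isSome_iff_exists.1 h2.2.1
    obtain ⟨z, hz⟩ := Option.isSome_iff_exists.1 h2.2.2
    obtain ⟨w, hw, hwf⟩ := Option.bind_eq_some_iff.1 hw'
    have e1 : ((C.ebar u).bind C.f0).get h2.2.1 = w' := by simp [hw']
    have e2 : (D.e0 l).get h2.2.2 = z := by simp [hz]
    refine Or.inr (Or.inl ⟨w, w', z, hw, Or.inl ⟨hwf, hz⟩, ?_⟩)
    rw [← e1, ← e2]
    exact (Option.some.inj h).symm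
  · obtain ⟨w', hw'⟩ := Option.isSome_iff_exists.1 h3.2.1
    obtain ⟨z, hz⟩ := Option.isSome_iff_exists.1 h3.2.2
    obtain ⟨w, hw, hwe⟩ := Option.bind_eq_some_iff.1 hw'
    have e1 : ((C.ebar u).bind C.e0).get h3.2.1 = w' := by simp [hw']
    have e2 : (D.f0 l).get h3.2.2 = z := by simp [hz]
    refine Or.inr (Or.inl ⟨w, w', z, hw, Or.inr ⟨hwe, hz⟩, ?_⟩)
    rw [← e1, ← e2]
    exact (Option.some.inj h).symm
  · obtain ⟨w, hw, hwz⟩ := Option.map_eq_some_iff.1 h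
    exact Or.inr (Or.inr ⟨w, hw, hwz.symm⟩)

end TensorDev

section TensorInv
variable {n : ℕ} {B B' : Type} {C : Crystal n B} {D : Crystal n B'}

theorem invC_tensor (hC : InvC C) (hD : InvC D) : InvC (tensor C D) := by
  have wt1zero : ∀ (u : B) (l : B'), (tensor C D).wt (u, l) 1 = 0 →
      C.wt u 1 = 0 ∧ D.wt l 1 = 0 := by
    intro u l h
    rw [ten_wt] at h
    have := hC.wt_nonneg u 1
    have := hD.wt_nonneg l 1
    omega
  constructor
  case wt_nonneg =>
    rintro ⟨u, l⟩ j
    rw [ten_wt]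
    exact add_nonneg (hC.wt_nonneg u j) (hD.wt_nonneg l j)
  case e0_none =>
    rintro ⟨u, l⟩ h
    obtain ⟨hu, hl⟩ := wt1zero u l h
    rw [ten_e0_zero l hu, hD.e0_none l hl]
    rfl
  case f0_none =>
    rintro ⟨u, l⟩ h
    obtain ⟨hu, hl⟩ := wt1zero u l h
    rw [ten_f0_zero l hu, hD.f0_none l hl]
    rfl
  case e0_wt =>
    rintro ⟨u, l⟩ ⟨u', l'⟩ h j
    by_cases hu : C.wt u 1 = 0
    · rw [ten_e0_zero l hu] at h
      obtain ⟨z, hz, hzz⟩ := Option.map_eq_some_iff.1 h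
      injection hzz with a b
      subst a; subst b
      rw [ten_wt, ten_wt, hD.e0_wt l _ hz j]
    · rw [ten_e0_pos l hu] at h
      obtain ⟨z, hz, hzz⟩ := Option.map_eq_some_iff.1 h
      injection hzz with a b
      subst a; subst b
      rw [ten_wt, ten_wt, hC.e0_wt u _ hz j]
  case e0_f0 =>
    rintro ⟨u, l⟩ ⟨u', l'⟩ h
    by_cases hu : C.wt u 1 = 0
    · rw [ten_e0_zero l hu] at h
      obtain ⟨z, hz, hzz⟩ := Option.map_eq_some_iff.1 h
      injection hzz with a b
      subst a; subst b
      rw [ten_f0_zero _ hu, hD.e0_f0 l _ hz]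
      rfl
    · rw [ten_e0_pos l hu] at h
      obtain ⟨z, hz, hzz⟩ := Option.map_eq_some_iff.1 h
      injection hzz with a b
      subst a; subst b
      have hz1 : C.wt z 1 ≠ 0 := by rw [hC.e0_wt u z hz 1]; exact hu
      rw [ten_f0_pos _ hz1, hC.e0_f0 u _ hz]
      rfl
  case e0_e0 =>
    rintro ⟨u, l⟩ ⟨u', l'⟩ h
    by_cases hu : C.wt u 1 = 0
    · rw [ten_e0_zero l hu] at h
      obtain ⟨z, hz, hzz⟩ := Option.map_eq_some_iff.1 h
      injection hzz with a b
      subst a; subst b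
      rw [ten_e0_zero _ hu, hD.e0_e0 l _ hz]
      rfl
    · rw [ten_e0_pos l hu] at h
      obtain ⟨z, hz, hzz⟩ := Option.map_eq_some_iff.1 h
      injection hzz with a b
      subst a; subst b
      have hz1 : C.wt z 1 ≠ 0 := by rw [hC.e0_wt u z hz 1]; exact hu
      rw [ten_e0_pos _ hz1, hC.e0_e0 u _ hz]
      rfl
  case f0_e0 =>
    rintro ⟨u, l⟩ ⟨u', l'⟩ h
    by_cases hu : C.wt u 1 = 0
    · rw [ten_f0_zero l hu] at h
      obtain ⟨z, hz, hzz⟩ := Option.map_eq_some_iff.1 h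
      injection hzz with a b
      subst a; subst b
      rw [ten_e0_zero _ hu, hD.f0_e0 l _ hz]
      rfl
    · rw [ten_f0_pos l hu] at h
      obtain ⟨z, hz, hzz⟩ := Option.map_eq_some_iff.1 h
      injection hzz with a b
      subst a; subst b
      have hz1 : C.wt z 1 ≠ 0 := by rw [hC.f0_wt u z hz 1]; exact hu
      rw [ten_e0_pos _ hz1, hC.f0_e0 u _ hz]
      rfl
  case f0_f0 =>
    rintro ⟨u, l⟩ ⟨u', l'⟩ h
    by_cases hu : C.wt u 1 = 0
    · rw [ten_f0_zero l hu] at h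
      obtain ⟨z, hz, hzz⟩ := Option.map_eq_some_iff.1 h
      injection hzz with a b
      subst a; subst b
      rw [ten_f0_zero _ hu, hD.f0_f0 l _ hz]
      rfl
    · rw [ten_f0_pos l hu] at h
      obtain ⟨z, hz, hzz⟩ := Option.map_eq_some_iff.1 h
      injection hzz with a b
      subst a; subst b
      have hz1 : C.wt z 1 ≠ 0 := by rw [hC.f0_wt u z hz 1]; exact hu
      rw [ten_f0_pos _ hz1, hC.f0_f0 u _ hz]
      rfl
  case ebar_wt1 =>
    rintro ⟨u, l⟩ y h
    rcases ten_ebar_elim hC hD h with ⟨z, hz, rfl⟩ | ⟨w, w', z, hw, hcase, rfl⟩ | ⟨w, hw, rfl⟩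
    · have := hD.ebar_wt1 l z hz
      rw [ten_wt, ten_wt]
      omega
    · have hww := hC.ebar_wt1 u w hw
      rcases hcase with ⟨hf, he⟩ | ⟨he', hf'⟩
      · have h1 := hC.f0_wt w w' hf 1
        have h2 := hD.e0_wt l z he 1
        rw [ten_wt, ten_wt]
        omega
      · have h1 := hC.e0_wt w w' he' 1
        have h2 := hD.f0_wt l z hf' 1
        rw [ten_wt, ten_wt]
        omega
    · have := hC.ebar_wt1 u w hw
      rw [ten_wt, ten_wt]
      omega
  case ebar_wt2 =>
    rintro ⟨u, l⟩ y h
    rcases ten_ebar_elim hC hD h with ⟨z, hz, rfl⟩ | ⟨w, w', z, hw, hcase, rfl⟩ | ⟨w, hw, rfl⟩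
    · have := hD.ebar_wt2 l z hz
      rw [ten_wt, ten_wt]
      omega
    · have hww := hC.ebar_wt2 u w hw
      rcases hcase with ⟨hf, he⟩ | ⟨he', hf'⟩
      · have h1 := hC.f0_wt w w' hf 2
        have h2 := hD.e0_wt l z he 2
        rw [ten_wt, ten_wt]
        omega
      · have h1 := hC.e0_wt w w' he' 2
        have h2 := hD.f0_wt l z hf' 2
        rw [ten_wt, ten_wt]
        omega
    · have := hC.ebar_wt2 u w hw
      rw [ten_wt, ten_wt]
      omega
  case tot =>
    rintro ⟨u, l⟩ h
    rw [ten_wt] at h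
    by_cases hu : C.wt u 1 = 0
    · have hl : D.wt l 1 ≠ 0 := by omega
      rcases hD.tot l hl with h' | h'
      · left; rw [ten_e0_zero l hu, Option.isSome_map]; exact h'
      · right; rw [ten_f0_zero l hu, Option.isSome_map]; exact h'
    · rcases hC.tot u hu with h' | h'
      · left; rw [ten_e0_pos l hu, Option.isSome_map]; exact h'
      · right; rw [ten_f0_pos l hu, Option.isSome_map]; exact h'
  case excl =>
    rintro ⟨u, l⟩ h
    by_cases hu : C.wt u 1 = 0
    · rw [ten_e0_zero l hu, Option.isSome_map] at h
      rw [ten_f0_zero l hu, hD.excl l h]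
      rfl
    · rw [ten_e0_pos l hu, Option.isSome_map] at h
      rw [ten_f0_pos l hu, hC.excl u h]
      rfl
  case e0_ebar =>
    rintro ⟨u, l⟩ ⟨u', l'⟩ h
    by_cases hu : C.wt u 1 = 0
    · rw [ten_e0_zero l hu] at h
      obtain ⟨z, hz, hzz⟩ := Option.map_eq_some_iff.1 h
      injection hzz with a b
      subst a; subst b
      have hfl' : D.f0 z = some l := hD.e0_f0 l z hz
      have hel' : D.e0 z = none := hD.e0_e0 l z hz
      have hfl : D.f0 l = none := hD.excl l (by rw [hz]; rfl)
      by_cases h2 : C.wt u 2 = 0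
      · rw [ten_ebar_00 z hu h2, ten_ebar_00 l hu h2, Option.isSome_map, Option.isSome_map]
        exact hD.e0_ebar l z hz
      · cases hB : C.ebar u with
        | none =>
          have hPf : (C.ebar u).bind C.f0 = none := by rw [hB]; rfl
          have hPe : (C.ebar u).bind C.e0 = none := by rw [hB]; rfl
          rw [ten_ebar_last hu (by simp [hPf]) (by simp [hPe]) h2,
              ten_ebar_last hu (by simp [hPf]) (by simp [hPe]) h2, hB]
          rfl
        | some w =>
          have hw1 : C.wt w 1 ≠ 0 := by have := hC.ebar_wt1 u w hB; omega
          rcases hC.tot w hw1 with hWe | hWf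
          · obtain ⟨we, hwe⟩ := Option.isSome_iff_exists.1 hWe
            have hfw : C.f0 w = none := hC.excl w hWe
            have hPf : (C.ebar u).bind C.f0 = none := by rw [hB, Option.bind_some, hfw]
            rw [ten_ebar_c3 hu h2 (by simp [hPf]) hB hwe hfl',
                ten_ebar_last hu (by simp [hPf]) (by simp [hfl]) h2, hB]
            rfl
          · obtain ⟨wf, hwf⟩ := Option.isSome_iff_exists.1 hWf
            have hew : C.e0 w = none := hC.e0_of_f0_some hwf
            have hPe : (C.ebar u).bind C.e0 = none := by rw [hB, Option.bind_some, hew]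
            rw [ten_ebar_last hu (by simp [hel']) (by simp [hPe]) h2,
                ten_ebar_c2 hu h2 hB hwf hz, hB]
            rfl
    · rw [ten_e0_pos l hu] at h
      obtain ⟨z, hz, hzz⟩ := Option.map_eq_some_iff.1 h
      injection hzz with a b
      subst a; subst b
      have hz1 : C.wt z 1 ≠ 0 := by rw [hC.e0_wt u z hz 1]; exact hu
      rw [ten_ebar_pos l hz1, ten_ebar_pos l hu, Option.isSome_map, Option.isSome_map]
      exact hC.e0_ebar u z hz
  case comm_e =>
    rintro ⟨u, l⟩ hx
    rw [ten_wt] at hx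
    by_cases hu : C.wt u 1 = 0
    · have hl1 : D.wt l 1 ≠ 0 := by omega
      by_cases h2 : C.wt u 2 = 0
      · have hL : ((tensor C D).e0 (u, l)).bind (tensor C D).ebar
            = ((D.e0 l).bind D.ebar).map (fun c => (u, c)) := by
          rw [ten_e0_zero l hu]
          cases hE : D.e0 l with
          | none => rfl
          | some z =>
            rw [Option.map_some, Option.bind_some, Option.bind_some, ten_ebar_00 z hu h2]
        have hR : ((tensor C D).ebar (u, l)).bind (tensor C D).e0
            = ((D.ebar l).bind D.e0).map (fun c => (u, c)) := by
          rw [ten_ebar_00 l hu h2]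
          cases hE : D.ebar l with
          | none => rfl
          | some z =>
            rw [Option.map_some, Option.bind_some, Option.bind_some, ten_e0_zero z hu]
        rw [hL, hR, hD.comm_e l hl1]
      · rcases hD.tot l hl1 with hE | hF
        · obtain ⟨l', hl'⟩ := Option.isSome_iff_exists.1 hE
          have hfl : D.f0 l = none := hD.excl l hE
          have hfl' : D.f0 l' = some l := hD.e0_f0 l l' hl'
          have hel' : D.e0 l' = none := hD.e0_e0 l l' hl'
          have hLs : (tensor C D).e0 (u, l) = some (u, l') := by
            rw [ten_e0_zero l hu, hl']
            rfl
          rw [hLs, Option.bind_some]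
          cases hB : C.ebar u with
          | none =>
            have hPf : (C.ebar u).bind C.f0 = none := by rw [hB]; rfl
            have hPe : (C.ebar u).bind C.e0 = none := by rw [hB]; rfl
            rw [ten_ebar_last hu (by simp [hPf]) (by simp [hPe]) h2, hB,
                ten_ebar_last hu (by simp [hPf]) (by simp [hPe]) h2, hB]
            rfl
          | some w =>
            have hw1 : C.wt w 1 ≠ 0 := by have := hC.ebar_wt1 u w hB; omega
            rcases hC.tot w hw1 with hWe | hWf
            · obtain ⟨we, hwe⟩ := Option.isSome_iff_exists.1 hWe
              have hfw : C.f0 w = none := hC.excl w hWe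
              have hPf : (C.ebar u).bind C.f0 = none := by rw [hB, Option.bind_some, hfw]
              rw [ten_ebar_c3 hu h2 (by simp [hel']) hB hwe hfl',
                  ten_ebar_last hu (by simp [hPf]) (by simp [hfl]) h2, hB,
                  Option.map_some, Option.bind_some, ten_e0_pos l hw1, hwe]
              rfl
            · obtain ⟨wf, hwf⟩ := Option.isSome_iff_exists.1 hWf
              have hew : C.e0 w = none := hC.e0_of_f0_some hwf
              have hPe : (C.ebar u).bind C.e0 = none := by rw [hB, Option.bind_some, hew]
              have hwf1 : C.wt wf 1 ≠ 0 := by rw [hC.f0_wt w wf hwf 1]; exact hw1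
              rw [ten_ebar_last hu (by simp [hel']) (by simp [hPe]) h2, hB,
                  ten_ebar_c2 hu h2 hB hwf hl',
                  Option.map_some, Option.bind_some, ten_e0_pos l' hwf1,
                  hC.f0_e0 w wf hwf]
              rfl
        · obtain ⟨l'', hl''⟩ := Option.isSome_iff_exists.1 hF
          have hel : D.e0 l = none := hD.e0_of_f0_some hl''
          have hLn : (tensor C D).e0 (u, l) = none := by
            rw [ten_e0_zero l hu, hel]
            rfl
          rw [hLn, Option.bind_none]
          cases hB : C.ebar u with
          | none =>
            have hPf : (C.ebar u).bind C.f0 = none := by rw [hB]; rfl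
            have hPe : (C.ebar u).bind C.e0 = none := by rw [hB]; rfl
            rw [ten_ebar_last hu (by simp [hPf]) (by simp [hPe]) h2, hB]
            rfl
          | some w =>
            have hw1 : C.wt w 1 ≠ 0 := by have := hC.ebar_wt1 u w hB; omega
            rcases hC.tot w hw1 with hWe | hWf
            · obtain ⟨we, hwe⟩ := Option.isSome_iff_exists.1 hWe
              have hfw : C.f0 w = none := hC.excl w hWe
              have hPf : (C.ebar u).bind C.f0 = none := by rw [hB, Option.bind_some, hfw]
              have hwe1 : C.wt we 1 ≠ 0 := by rw [hC.e0_wt w we hwe 1]; exact hw1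
              rw [ten_ebar_c3 hu h2 (by simp [hPf]) hB hwe hl'',
                  Option.bind_some, ten_e0_pos l'' hwe1, hC.e0_e0 w we hwe]
              rfl
            · obtain ⟨wf, hwf⟩ := Option.isSome_iff_exists.1 hWf
              have hew : C.e0 w = none := hC.e0_of_f0_some hwf
              have hPe : (C.ebar u).bind C.e0 = none := by rw [hB, Option.bind_some, hew]
              rw [ten_ebar_last hu (by simp [hel]) (by simp [hPe]) h2, hB,
                  Option.map_some, Option.bind_some, ten_e0_pos l hw1, hew]
              rfl
    · have hL : ((tensor C D).e0 (u, l)).bind (tensor C D).ebar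
          = ((C.e0 u).bind C.ebar).map (fun b => (b, l)) := by
        rw [ten_e0_pos l hu]
        cases hE : C.e0 u with
        | none => rfl
        | some z =>
          have hz1 : C.wt z 1 ≠ 0 := by rw [hC.e0_wt u z hE 1]; exact hu
          rw [Option.map_some, Option.bind_some, Option.bind_some, ten_ebar_pos l hz1]
      have hR : ((tensor C D).ebar (u, l)).bind (tensor C D).e0
          = ((C.ebar u).bind C.e0).map (fun b => (b, l)) := by
        rw [ten_ebar_pos l hu]
        cases hB : C.ebar u with
        | none => rfl
        | some w =>
          have hw1 : C.wt w 1 ≠ 0 := by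
            have := hC.ebar_wt1 u w hB
            have := hC.wt_nonneg u 1
            omega
          rw [Option.map_some, Option.bind_some, Option.bind_some, ten_e0_pos l hw1]
      rw [hL, hR, hC.comm_e u hu]
  case comm_f =>
    rintro ⟨u, l⟩ hx
    rw [ten_wt] at hx
    by_cases hu : C.wt u 1 = 0
    · have hl1 : D.wt l 1 ≠ 0 := by omega
      by_cases h2 : C.wt u 2 = 0
      · have hL : ((tensor C D).f0 (u, l)).bind (tensor C D).ebar
            = ((D.f0 l).bind D.ebar).map (fun c => (u, c)) := by
          rw [ten_f0_zero l hu]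
          cases hE : D.f0 l with
          | none => rfl
          | some z =>
            rw [Option.map_some, Option.bind_some, Option.bind_some, ten_ebar_00 z hu h2]
        have hR : ((tensor C D).ebar (u, l)).bind (tensor C D).f0
            = ((D.ebar l).bind D.f0).map (fun c => (u, c)) := by
          rw [ten_ebar_00 l hu h2]
          cases hE : D.ebar l with
          | none => rfl
          | some z =>
            rw [Option.map_some, Option.bind_some, Option.bind_some, ten_f0_zero z hu]
        rw [hL, hR, hD.comm_f l hl1]
      · rcases hD.tot l hl1 with hE | hF
        · obtain ⟨l', hl'⟩ := Option.isSome_iff_exists.1 hE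
          have hfl : D.f0 l = none := hD.excl l hE
          have hLn : (tensor C D).f0 (u, l) = none := by
            rw [ten_f0_zero l hu, hfl]
            rfl
          rw [hLn, Option.bind_none]
          cases hB : C.ebar u with
          | none =>
            have hPf : (C.ebar u).bind C.f0 = none := by rw [hB]; rfl
            have hPe : (C.ebar u).bind C.e0 = none := by rw [hB]; rfl
            rw [ten_ebar_last hu (by simp [hPf]) (by simp [hPe]) h2, hB]
            rfl
          | some w =>
            have hw1 : C.wt w 1 ≠ 0 := by have := hC.ebar_wt1 u w hB; omega
            rcases hC.tot w hw1 with hWe | hWf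
            · obtain ⟨we, hwe⟩ := Option.isSome_iff_exists.1 hWe
              have hfw : C.f0 w = none := hC.excl w hWe
              have hPf : (C.ebar u).bind C.f0 = none := by rw [hB, Option.bind_some, hfw]
              rw [ten_ebar_last hu (by simp [hPf]) (by simp [hfl]) h2, hB,
                  Option.map_some, Option.bind_some, ten_f0_pos l hw1, hfw]
              rfl
            · obtain ⟨wf, hwf⟩ := Option.isSome_iff_exists.1 hWf
              have hwf1 : C.wt wf 1 ≠ 0 := by rw [hC.f0_wt w wf hwf 1]; exact hw1
              rw [ten_ebar_c2 hu h2 hB hwf hl',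
                  Option.bind_some, ten_f0_pos l' hwf1, hC.f0_f0 w wf hwf]
              rfl
        · obtain ⟨l'', hl''⟩ := Option.isSome_iff_exists.1 hF
          have hel : D.e0 l = none := hD.e0_of_f0_some hl''
          have hfl'' : D.f0 l'' = none := hD.f0_f0 l l'' hl''
          have hel'' : D.e0 l'' = some l := hD.f0_e0 l l'' hl''
          have hLs : (tensor C D).f0 (u, l) = some (u, l'') := by
            rw [ten_f0_zero l hu, hl'']
            rfl
          rw [hLs, Option.bind_some]
          cases hB : C.ebar u with
          | none =>
            have hPf : (C.ebar u).bind C.f0 = none := by rw [hB]; rfl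
            have hPe : (C.ebar u).bind C.e0 = none := by rw [hB]; rfl
            rw [ten_ebar_last hu (by simp [hPf]) (by simp [hPe]) h2, hB,
                ten_ebar_last hu (by simp [hPf]) (by simp [hPe]) h2, hB]
            rfl
          | some w =>
            have hw1 : C.wt w 1 ≠ 0 := by have := hC.ebar_wt1 u w hB; omega
            rcases hC.tot w hw1 with hWe | hWf
            · obtain ⟨we, hwe⟩ := Option.isSome_iff_exists.1 hWe
              have hfw : C.f0 w = none := hC.excl w hWe
              have hPf : (C.ebar u).bind C.f0 = none := by rw [hB, Option.bind_some, hfw]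
              have hwe1 : C.wt we 1 ≠ 0 := by rw [hC.e0_wt w we hwe 1]; exact hw1
              rw [ten_ebar_last hu (by simp [hPf]) (by simp [hfl'']) h2, hB,
                  ten_ebar_c3 hu h2 (by simp [hPf]) hB hwe hl'',
                  Option.map_some, Option.bind_some, ten_f0_pos l'' hwe1,
                  hC.e0_f0 w we hwe]
              rfl
            · obtain ⟨wf, hwf⟩ := Option.isSome_iff_exists.1 hWf
              have hew : C.e0 w = none := hC.e0_of_f0_some hwf
              have hPe : (C.ebar u).bind C.e0 = none := by rw [hB, Option.bind_some, hew]
              rw [ten_ebar_c2 hu h2 hB hwf hel'',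
                  ten_ebar_last hu (by simp [hel]) (by simp [hPe]) h2, hB,
                  Option.map_some, Option.bind_some, ten_f0_pos l hw1, hwf]
              rfl
    · have hL : ((tensor C D).f0 (u, l)).bind (tensor C D).ebar
          = ((C.f0 u).bind C.ebar).map (fun b => (b, l)) := by
        rw [ten_f0_pos l hu]
        cases hE : C.f0 u with
        | none => rfl
        | some z =>
          have hz1 : C.wt z 1 ≠ 0 := by rw [hC.f0_wt u z hE 1]; exact hu
          rw [Option.map_some, Option.bind_some, Option.bind_some, ten_ebar_pos l hz1]
      have hR : ((tensor C D).ebar (u, l)).bind (tensor C D).f0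
          = ((C.ebar u).bind C.f0).map (fun b => (b, l)) := by
        rw [ten_ebar_pos l hu]
        cases hB : C.ebar u with
        | none => rfl
        | some w =>
          have hw1 : C.wt w 1 ≠ 0 := by
            have := hC.ebar_wt1 u w hB
            have := hC.wt_nonneg u 1
            omega
          rw [Option.map_some, Option.bind_some, Option.bind_some, ten_f0_pos l hw1]
      rw [hL, hR, hC.comm_f u hu]

theorem invC_pow : ∀ m : ℕ, InvC (powC n m)
  | 0 => invC_unit
  | m + 1 => invC_tensor (invC_pow m) invC_std

end TensorInv

section Transfer
variable {n : ℕ} {B B' : Type}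

lemma iterO_succ' {g : B → Option B} (k : ℕ) (b : B) :
    iterO g (k + 1) b = (iterO g k b).bind g := rfl

lemma iterO_one' (g : B → Option B) (b : B) : iterO g 1 b = g b := rfl

lemma iterO_none_mono {g : B → Option B} {b : B} {k k' : ℕ} (h : k ≤ k')
    (h0 : iterO g k b = none) : iterO g k' b = none := by
  induction k' with
  | zero =>
    have : k = 0 := Nat.le_zero.1 h
    subst this
    exact h0
  | succ m ih =>
    by_cases hk : k = m + 1
    · subst hk; exact h0
    · rw [iterO_succ', ih (by omega)]
      rfl

lemma iterO_bdd {g : B → Option B} {b : B} (h : ∃ N, iterO g N b = none) :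
    BddAbove {k | iterO g k b ≠ none} := by
  obtain ⟨N, hN⟩ := h
  refine ⟨N, fun k hk => ?_⟩
  by_contra hlt
  push_neg at hlt
  exact hk (iterO_none_mono (by omega) hN)

lemma sSup_one_le {g : B → Option B} {b z : B} (hbdd : ∃ N, iterO g N b = none)
    (h : g b = some z) : 1 ≤ sSup {k | iterO g k b ≠ none} :=
  le_csSup (iterO_bdd hbdd) (by rw [Set.mem_setOf_eq, iterO_one', h]; simp)

lemma sSup_op_eq_zero {g : B → Option B} {b : B} (h : g b = none) :
    sSup {k | iterO g k b ≠ none} = 0 := by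
  have hsub : ∀ k ∈ {k | iterO g k b ≠ none}, k ≤ 0 := by
    intro k hk
    by_contra hk0
    push_neg at hk0
    exact hk (iterO_none_mono hk0 (by rw [iterO_one']; exact h))
  refine Nat.le_zero.1 (csSup_le ⟨0, ?_⟩ hsub)
  simp [iterO]

lemma opt_inj {φ : B → B'} {S : Set B} (hinj : Set.InjOn φ S) {o1 o2 : Option B}
    (h1 : ∀ a, o1 = some a → a ∈ S) (h2 : ∀ a, o2 = some a → a ∈ S)
    (h : o1.map φ = o2.map φ) : o1 = o2 := by
  cases o1 with
  | none =>
    cases o2 with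
    | none => rfl
    | some a2 => simp at h
  | some a1 =>
    cases o2 with
    | none => simp at h
    | some a2 =>
      simp only [Option.map_some, Option.some.injEq] at h
      rw [hinj (h1 a1 rfl) (h2 a2 rfl) h]

end Transfer


/-- In a normal `q⁺_n`-crystal (`n ≥ 2`): (a) if `wt(b)_1 ≠ 0` then
`e_1̄ e_0 (b) = e_0 e_1̄ (b)` and `e_1̄ f_0 (b) = f_0 e_1̄ (b)`;
(b) if `e_1̄(b) = c` then `ε_0(b) ≤ ε_0(c)` and `φ_0(b) ≤ φ_0(c)`. -/
theorem normal_ebar_e0_props (n : ℕ) (hn : 2 ≤ n) {B : Type} (C : Crystal n B)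
    (hnorm : IsNormal C) (b : B) :
    (C.wt b 1 ≠ 0 →
      (C.e0 b).bind C.ebar = (C.ebar b).bind C.e0 ∧
      (C.f0 b).bind C.ebar = (C.ebar b).bind C.f0) ∧
    (∀ c : B, C.ebar b = some c → C.eps0 b ≤ C.eps0 c ∧ C.phi0 b ≤ C.phi0 c) := by
  obtain ⟨hQ, hiso⟩ := hnorm
  obtain ⟨m, x, φ, hbij, hagree⟩ := hiso b
  have hInv : InvC (powC n m) := invC_pow m
  have hbS : b ∈ component C b := Relation.ReflTransGen.refl
  have clos_f0 : ∀ y z, y ∈ component C b → C.f0 y = some z → z ∈ component C b :=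
    fun y z hy h => Relation.ReflTransGen.tail hy (Or.inl (Or.inr (Or.inr h)))
  have clos_e0 : ∀ y z, y ∈ component C b → C.e0 y = some z → z ∈ component C b :=
    fun y z hy h =>
      Relation.ReflTransGen.tail hy (Or.inr (Or.inr (Or.inr ((hQ.zero_iff y z).1 h))))
  have clos_ebar : ∀ y z, y ∈ component C b → C.ebar y = some z → z ∈ component C b :=
    fun y z hy h =>
      Relation.ReflTransGen.tail hy (Or.inr (Or.inr (Or.inl ((hQ.bar_iff y z).1 h))))
  have agree_wt : ∀ y, y ∈ component C b → ∀ j, (powC n m).wt (φ y) j = C.wt y j :=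
    fun y hy j => (hagree y hy).1 j
  have agree_ebar : ∀ y, y ∈ component C b → (C.ebar y).map φ = (powC n m).ebar (φ y) :=
    fun y hy => (hagree y hy).2.2.2.1
  have agree_e0 : ∀ y, y ∈ component C b → (C.e0 y).map φ = (powC n m).e0 (φ y) :=
    fun y hy => (hagree y hy).2.2.2.2.2.1
  have agree_f0 : ∀ y, y ∈ component C b → (C.f0 y).map φ = (powC n m).f0 (φ y) :=
    fun y hy => (hagree y hy).2.2.2.2.2.2
  have key : C.wt b 1 ≠ 0 →
      (C.e0 b).bind C.ebar = (C.ebar b).bind C.e0 ∧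
      (C.f0 b).bind C.ebar = (C.ebar b).bind C.f0 := by
    intro hwb
    have hwφ : (powC n m).wt (φ b) 1 ≠ 0 := by rw [agree_wt b hbS 1]; exact hwb
    have hcommP := hInv.comm_e (φ b) hwφ
    have hcommPf := hInv.comm_f (φ b) hwφ
    have A : ((C.e0 b).bind C.ebar).map φ = ((powC n m).e0 (φ b)).bind (powC n m).ebar := by
      cases hE : C.e0 b with
      | none =>
        have h1 : (powC n m).e0 (φ b) = none := by rw [← agree_e0 b hbS, hE]; rfl
        rw [h1]
        rfl
      | some z =>
        have h1 : (powC n m).e0 (φ b) = some (φ z) := by rw [← agree_e0 b hbS, hE]; rfl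
        rw [h1, Option.bind_some, Option.bind_some]
        exact agree_ebar z (clos_e0 b z hbS hE)
    have A' : ((C.ebar b).bind C.e0).map φ = ((powC n m).ebar (φ b)).bind (powC n m).e0 := by
      cases hE : C.ebar b with
      | none =>
        have h1 : (powC n m).ebar (φ b) = none := by rw [← agree_ebar b hbS, hE]; rfl
        rw [h1]
        rfl
      | some z =>
        have h1 : (powC n m).ebar (φ b) = some (φ z) := by rw [← agree_ebar b hbS, hE]; rfl
        rw [h1, Option.bind_some, Option.bind_some]
        exact agree_e0 z (clos_ebar b z hbS hE)
    have Bf : ((C.f0 b).bind C.ebar).map φ = ((powC n m).f0 (φ b)).bind (powC n m).ebar := by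
      cases hE : C.f0 b with
      | none =>
        have h1 : (powC n m).f0 (φ b) = none := by rw [← agree_f0 b hbS, hE]; rfl
        rw [h1]
        rfl
      | some z =>
        have h1 : (powC n m).f0 (φ b) = some (φ z) := by rw [← agree_f0 b hbS, hE]; rfl
        rw [h1, Option.bind_some, Option.bind_some]
        exact agree_ebar z (clos_f0 b z hbS hE)
    have Bf' : ((C.ebar b).bind C.f0).map φ = ((powC n m).ebar (φ b)).bind (powC n m).f0 := by
      cases hE : C.ebar b with
      | none =>
        have h1 : (powC n m).ebar (φ b) = none := by rw [← agree_ebar b hbS, hE]; rfl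
        rw [h1]
        rfl
      | some z =>
        have h1 : (powC n m).ebar (φ b) = some (φ z) := by rw [← agree_ebar b hbS, hE]; rfl
        rw [h1, Option.bind_some, Option.bind_some]
        exact agree_f0 z (clos_ebar b z hbS hE)
    have hinj := hbij.2.1
    constructor
    · refine opt_inj hinj ?_ ?_ (by rw [A, A', hcommP])
      · intro a ha
        obtain ⟨z, hz1, hz2⟩ := Option.bind_eq_some_iff.1 ha
        exact clos_ebar z a (clos_e0 b z hbS hz1) hz2
      · intro a ha
        obtain ⟨z, hz1, hz2⟩ := Option.bind_eq_some_iff.1 ha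
        exact clos_e0 z a (clos_ebar b z hbS hz1) hz2
    · refine opt_inj hinj ?_ ?_ (by rw [Bf, Bf', hcommPf])
      · intro a ha
        obtain ⟨z, hz1, hz2⟩ := Option.bind_eq_some_iff.1 ha
        exact clos_ebar z a (clos_f0 b z hbS hz1) hz2
      · intro a ha
        obtain ⟨z, hz1, hz2⟩ := Option.bind_eq_some_iff.1 ha
        exact clos_f0 z a (clos_ebar b z hbS hz1) hz2
  refine ⟨key, ?_⟩
  intro c hc
  have hc1 : C.wt c 1 = C.wt b 1 + 1 := by
    have := (hQ.ebar_wt hn b c hc).1 1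
    simpa using this
  by_cases hb1 : C.wt b 1 = 0
  · have h0 := hQ.zero_string b
    rw [if_pos hb1] at h0
    omega
  · obtain ⟨hcomm1, hcomm2⟩ := key hb1
    have hstr := hQ.zero_string b
    rw [if_neg hb1] at hstr
    have hstrc := hQ.zero_string c
    rw [if_neg (by have := hQ.wt_nonneg b 1; omega)] at hstrc
    constructor
    · rcases Nat.eq_zero_or_pos (C.eps0 b) with h | h
      · rw [h]; exact Nat.zero_le _
      · have hE : C.e0 b ≠ none := by
          intro hE
          have h0 : C.eps0 b = 0 := sSup_op_eq_zero hE
          omega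
        obtain ⟨z, hz⟩ := Option.ne_none_iff_exists'.1 hE
        have hebz : C.ebar z ≠ none := by
          intro hbz
          have h1 : C.epsBar z = 0 := sSup_op_eq_zero hbz
          have h2 : 1 ≤ C.epsBar b := sSup_one_le (hQ.ebar_bdd b) hc
          rw [(hQ.e0_wt b z hz).2.2.1] at h2
          omega
        obtain ⟨w, hw⟩ := Option.ne_none_iff_exists'.1 hebz
        have hec : C.e0 c = some w := by
          rw [hz, hc, Option.bind_some, Option.bind_some] at hcomm1
          rw [← hcomm1, hw]
        have h3 : 1 ≤ C.eps0 c := sSup_one_le (hQ.e0_bdd c) hec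
        omega
    · rcases Nat.eq_zero_or_pos (C.phi0 b) with h | h
      · rw [h]; exact Nat.zero_le _
      · have hF : C.f0 b ≠ none := by
          intro hF
          have h0 : C.phi0 b = 0 := sSup_op_eq_zero hF
          omega
        obtain ⟨z, hz⟩ := Option.ne_none_iff_exists'.1 hF
        have hez : C.e0 z = some b := (hQ.zero_iff z b).2 hz
        have hebz : C.ebar z ≠ none := by
          intro hbz
          have h1 : C.epsBar z = 0 := sSup_op_eq_zero hbz
          have h2 : 1 ≤ C.epsBar b := sSup_one_le (hQ.ebar_bdd b) hc
          rw [← (hQ.e0_wt z b hez).2.2.1] at h2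
          omega
        obtain ⟨w, hw⟩ := Option.ne_none_iff_exists'.1 hebz
        have hfc : C.f0 c = some w := by
          rw [hz, hc, Option.bind_some, Option.bind_some] at hcomm2
          rw [← hcomm2, hw]
        have h3 : 1 ≤ C.phi0 c := sSup_one_le (hQ.f0_bdd c) hfc
        omega

end QPaper
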